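/- arXiv:2310.15378 — 6 statements merged into one kernel-verified Lean document; each statement's English description precedes it below -/
import Mathlib

section
/- Let p be a prime, q = p^m, and k a positive integer dividing q − 1, with n = (q − 1)/k. Then the characteristic polynomial of the complex adjacency matrix A of the generalized Paley graph Γ(k,q) equals (X − n)·∏_{i=0}^{k−1} (X − η_i)^n in ℂ[X], where η_0, …, η_{k−1} are the cyclotomic Gaussian periods. (Equivalently, the spectrum of Γ(k,q) consists of n with multiplicity 1 together with each Gaussian period η_i repeated n times.) -/
open Polynomial Finset
open scoped Classical

/-- The `i`-th cyclotomic Gaussian period for the pair `(k, q)`, where `q = #F`,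
`ω` is a generator of `Fˣ` and the coset `ω^i⟨ω^k⟩` is described as
`{ω^i y^k : y ∈ Fˣ}`. -/
noncomputable def gaussianPeriod (p : ℕ) (F : Type) [Field F] [Fintype F]
    [Algebra (ZMod p) F] (ω : Fˣ) (k i : ℕ) : ℂ :=
  ∑ x ∈ Finset.univ.filter (fun x : Fˣ => ∃ y : Fˣ, x = ω ^ i * y ^ k),
    Complex.exp (2 * Real.pi * Complex.I *
      ((Algebra.trace (ZMod p) F (x : F)).val : ℂ) / (p : ℂ))

/-- The complex adjacency matrix of the generalized Paley (di)graph `Γ(k,q)`: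
there is an arrow from `u` to `v` iff `v - u` is a nonzero `k`-th power. -/
noncomputable def gpAdj (F : Type) [Field F] [Fintype F] (k : ℕ) : Matrix F F ℂ :=
  Matrix.of fun u v => if ∃ x : Fˣ, v - u = (x : F) ^ k then 1 else 0

set_option linter.unusedSectionVars false

section MatrixAux

variable {n : Type} [Fintype n] [DecidableEq n] {R : Type} [CommRing R]

lemma my_charpoly_conj (P M Q : Matrix n n R) (h1 : P * Q = 1) :
    (P * M * Q).charpoly = M.charpoly := by
  have h2 : Q * P = 1 := mul_eq_one_comm.mp h1
  have hmap : P.map (C : R →+* R[X]) * Q.map C = 1 := by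
    rw [← Matrix.map_mul, h1, Matrix.map_one _ (map_zero C) (map_one C)]
  have key : Matrix.charmatrix (P * M * Q) =
      P.map C * Matrix.charmatrix M * Q.map C := by
    unfold Matrix.charmatrix
    rw [Matrix.mul_sub, Matrix.sub_mul]
    congr 1
    · rw [← (Matrix.scalar_commute (X : R[X]) (fun r => Commute.all _ _) (P.map C)).eq,
        Matrix.mul_assoc, hmap, Matrix.mul_one]
    · simp only [RingHom.mapMatrix_apply]
      rw [← Matrix.map_mul, ← Matrix.map_mul]
  unfold Matrix.charpoly
  rw [key, Matrix.det_mul, Matrix.det_mul, mul_comm (P.map C).det, mul_assoc,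
    ← Matrix.det_mul, hmap, Matrix.det_one, mul_one]

lemma my_charpoly_diagonal (d : n → R) :
    (Matrix.diagonal d).charpoly = ∏ i : n, (X - C (d i)) := by
  have h : Matrix.charmatrix (Matrix.diagonal d) =
      Matrix.diagonal (fun i => (X : R[X]) - C (d i)) := by
    refine Matrix.ext (fun i j => ?_)
    by_cases h : i = j
    · subst h
      rw [Matrix.charmatrix_apply_eq, Matrix.diagonal_apply_eq, Matrix.diagonal_apply_eq]
    · rw [Matrix.charmatrix_apply_ne _ _ _ h, Matrix.diagonal_apply_ne _ h,
        Matrix.diagonal_apply_ne _ h, map_zero, neg_zero]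
  rw [Matrix.charpoly, h, Matrix.det_diagonal]

end MatrixAux

section CharAux

variable (p : ℕ) (F : Type) [Field F] [Fintype F] [Algebra (ZMod p) F]

noncomputable def gpChar (z : F) : ℂ :=
  Complex.exp (2 * Real.pi * Complex.I / p) ^ (Algebra.trace (ZMod p) F z).val

lemma gpChar_eq (z : F) :
    Complex.exp (2 * Real.pi * Complex.I *
      ((Algebra.trace (ZMod p) F z).val : ℂ) / (p : ℂ)) = gpChar p F z := by
  rw [gpChar, ← Complex.exp_nat_mul]
  congr 1
  ring

variable (hp0 : p ≠ 0)
include hp0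

lemma gpChar_root : Complex.exp (2 * Real.pi * Complex.I / p) ^ p = 1 :=
  (Complex.isPrimitiveRoot_exp p hp0).pow_eq_one

lemma gpChar_pow_mod (s : ℕ) :
    Complex.exp (2 * Real.pi * Complex.I / p) ^ (s % p)
      = Complex.exp (2 * Real.pi * Complex.I / p) ^ s := by
  conv_rhs => rw [← Nat.div_add_mod s p]
  rw [pow_add, pow_mul, gpChar_root p hp0, one_pow, one_mul]

lemma gpChar_add (x y : F) : gpChar p F (x + y) = gpChar p F x * gpChar p F y := by
  haveI : NeZero p := ⟨hp0⟩
  rw [gpChar, gpChar, gpChar, map_add, ZMod.val_add, gpChar_pow_mod p hp0, pow_add]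

lemma gpChar_zero : gpChar p F 0 = 1 := by
  haveI : NeZero p := ⟨hp0⟩
  rw [gpChar, map_zero, ZMod.val_zero, pow_zero]

lemma gpChar_sum_eq_zero
    (hnd : ∀ t : F, t ≠ 0 → ∃ b : F, gpChar p F (b * t) ≠ 1)
    {t : F} (ht : t ≠ 0) : ∑ a : F, gpChar p F (a * t) = 0 := by
  obtain ⟨b, hb⟩ := hnd t ht
  have key : gpChar p F (b * t) * ∑ a : F, gpChar p F (a * t)
      = ∑ a : F, gpChar p F (a * t) := by
    rw [Finset.mul_sum]
    refine Fintype.sum_equiv (Equiv.addLeft b) _ _ (fun a => ?_)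
    rw [← gpChar_add p F hp0]
    congr 1
    show b * t + a * t = (b + a) * t
    ring
  by_contra h
  exact hb (mul_right_cancel₀ h (key.trans (one_mul _).symm))

lemma gpChar_sum_self : ∑ a : F, gpChar p F (a * 0) = (Fintype.card F : ℂ) := by
  simp [mul_zero, gpChar_zero p F hp0]

end CharAux

lemma trace_nondeg (p : ℕ) (hp : p.Prime) (F : Type) [Field F] [Fintype F]
    [Algebra (ZMod p) F] :
    ∀ t : F, t ≠ 0 → ∃ b : F, Algebra.trace (ZMod p) F (t * b) ≠ 0 := by
  haveI : Fact p.Prime := ⟨hp⟩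
  haveI : CharP F p := charP_of_injective_algebraMap (algebraMap (ZMod p) F).injective p
  have hchar : ringChar F = p := ringChar.eq F p
  subst hchar
  exact fun t ht => FiniteField.trace_to_zmod_nondegenerate F ht

theorem stmt_0 (p m k n : ℕ) (hp : p.Prime) (hm : 0 < m)
    (F : Type) [Field F] [Fintype F] [Algebra (ZMod p) F]
    (hF : Fintype.card F = p ^ m)
    (ω : Fˣ) (hω : ∀ u : Fˣ, u ∈ Subgroup.zpowers ω)
    (hk : 0 < k) (hkq : k ∣ p ^ m - 1) (hn : n = (p ^ m - 1) / k) :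
    (gpAdj F k).charpoly =
      (X - C (n : ℂ)) *
        ∏ i ∈ Finset.range k, (X - C (gaussianPeriod p F ω k i)) ^ n := by
  classical
  haveI : Fact p.Prime := ⟨hp⟩
  have hp0 : p ≠ 0 := hp.pos.ne'
  have hq1 : 1 < p ^ m := Nat.one_lt_pow hm.ne' hp.one_lt
  have hcardU : Nat.card Fˣ = p ^ m - 1 := by
    rw [Nat.card_eq_fintype_card, Fintype.card_units, hF]
  have hord : orderOf ω = p ^ m - 1 := by
    rw [orderOf_eq_card_of_forall_mem_zpowers hω, hcardU]
  have hkn : k * n = p ^ m - 1 := by rw [hn, Nat.mul_div_cancel' hkq]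
  have hnpos : 0 < n := by
    rcases Nat.eq_zero_or_pos n with h | h
    · rw [h, mul_zero] at hkn
      omega
    · exact h
  -- nondegeneracy of the character
  have hnd : ∀ t : F, t ≠ 0 → ∃ b : F, gpChar p F (b * t) ≠ 1 := by
    intro t ht
    obtain ⟨b, hb⟩ := trace_nondeg p hp F t ht
    refine ⟨b, ?_⟩
    rw [gpChar]
    haveI : NeZero p := ⟨hp0⟩
    have hv0 : (Algebra.trace (ZMod p) F (b * t)).val ≠ 0 := by
      rw [mul_comm]
      intro h
      exact hb ((ZMod.val_eq_zero _).mp h)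
    exact (Complex.isPrimitiveRoot_exp p hp0).pow_ne_one_of_pos_of_lt
      hv0 (ZMod.val_lt _)
  have horth : ∀ t : F, ∑ a : F, gpChar p F (a * t)
      = if t = 0 then ((p : ℂ) ^ m) else 0 := by
    intro t
    by_cases h : t = 0
    · subst h
      rw [if_pos rfl, gpChar_sum_self p F hp0, hF]
      push_cast
      ring
    · rw [if_neg h, gpChar_sum_eq_zero p F hp0 hnd h]
  have hqC : ((p : ℂ) ^ m) ≠ 0 := pow_ne_zero _ (Nat.cast_ne_zero.mpr hp0)
  -- eigenvalues and the diagonalizing matrices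
  set lam : F → ℂ := fun a =>
    ∑ v ∈ univ.filter (fun v : F => ∃ x : Fˣ, v = (x : F) ^ k), gpChar p F (a * v)
    with hlam
  set Qm : Matrix F F ℂ := Matrix.of (fun u a : F => gpChar p F (a * u)) with hQm
  set Qi : Matrix F F ℂ :=
    Matrix.of (fun a v : F => ((p : ℂ) ^ m)⁻¹ * gpChar p F (-(a * v))) with hQi
  have hQQ : Qm * Qi = 1 := by
    ext u v
    rw [Matrix.mul_apply]
    have step : ∀ a : F, Qm u a * Qi a v
        = ((p : ℂ) ^ m)⁻¹ * gpChar p F (a * (u - v)) := by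
      intro a
      rw [hQm, hQi]
      simp only [Matrix.of_apply]
      rw [show a * (u - v) = a * u + -(a * v) by ring, gpChar_add p F hp0]
      ring
    rw [Finset.sum_congr rfl (fun a _ => step a), ← Finset.mul_sum, horth (u - v)]
    by_cases h : u = v
    · subst h
      rw [if_pos (sub_self u), inv_mul_cancel₀ hqC, Matrix.one_apply_eq]
    · rw [if_neg (sub_ne_zero_of_ne h), mul_zero, Matrix.one_apply_ne h]
  have hAQ : gpAdj F k * Qm = Qm * Matrix.diagonal lam := by
    ext u a
    rw [Matrix.mul_apply, Matrix.mul_diagonal]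
    have lhs_eq : ∑ v : F, gpAdj F k u v * Qm v a
        = ∑ v ∈ univ.filter (fun v : F => ∃ x : Fˣ, v - u = (x : F) ^ k),
            gpChar p F (a * v) := by
      rw [Finset.sum_filter]
      refine Finset.sum_congr rfl (fun v _ => ?_)
      rw [gpAdj, hQm]
      simp only [Matrix.of_apply, ite_mul, one_mul, zero_mul]
    rw [lhs_eq, hQm, Matrix.of_apply, hlam, Finset.mul_sum]
    refine Finset.sum_nbij' (fun v => v - u) (fun w => w + u) ?_ ?_ ?_ ?_ ?_
    · intro v hv
      simp only [mem_filter, mem_univ, true_and] at hv ⊢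
      exact hv
    · intro w hw
      simp only [mem_filter, mem_univ, true_and] at hw ⊢
      simpa using hw
    · intro v _; ring
    · intro w _; ring
    · intro v _
      rw [← gpChar_add p F hp0]
      congr 1
      ring
  have hA : gpAdj F k = Qm * Matrix.diagonal lam * Qi := by
    rw [← hAQ, Matrix.mul_assoc, hQQ, Matrix.mul_one]
  rw [hA, my_charpoly_conj _ _ _ hQQ, my_charpoly_diagonal]
  -- now the product over F
  have hpowex : ∀ a : Fˣ, ∃ j : ℕ, ω ^ j = a := by
    intro a
    exact (Submonoid.mem_powers_iff _ _).mp (mem_powers_iff_mem_zpowers.mpr (hω a))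
  choose e he using hpowex
  -- fibers
  have hfib : ∀ i : ℕ, i < k → ∀ a : Fˣ,
      (e a % k = i ↔ ∃ y : Fˣ, a = ω ^ i * y ^ k) := by
    intro i hi a
    constructor
    · intro h
      refine ⟨ω ^ (e a / k), ?_⟩
      rw [← pow_mul, ← pow_add, ← h, Nat.mod_add_div' (e a) k, he a]
    · rintro ⟨y, rfl⟩
      have h1 : ω ^ (e (ω ^ i * y ^ k)) = ω ^ (i + e y * k) := by
        rw [he, pow_add, pow_mul, he y]
      have h2 : e (ω ^ i * y ^ k) ≡ i + e y * k [MOD orderOf ω] :=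
        pow_eq_pow_iff_modEq.mp h1
      have h3 : e (ω ^ i * y ^ k) ≡ i + e y * k [MOD k] := by
        refine Nat.ModEq.of_dvd ?_ h2
        rw [hord, ← hkn]
        exact Dvd.intro n rfl
      have h4 : (i + e y * k) % k = i := by
        rw [Nat.add_mul_mod_self_right, Nat.mod_eq_of_lt hi]
      rw [Nat.ModEq] at h3
      rw [h3, h4]
  -- the set of k-th powers
  have hSk : ∀ x : Fˣ, (∃ y : Fˣ, x = y ^ k) ↔ x ∈ Subgroup.zpowers (ω ^ k) := by
    intro x
    constructor
    · rintro ⟨y, rfl⟩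
      refine Subgroup.mem_zpowers_iff.mpr ⟨(e y : ℤ), ?_⟩
      rw [zpow_natCast, ← pow_mul, mul_comm, pow_mul, he y]
    · intro hx
      obtain ⟨z, hz⟩ := Subgroup.mem_zpowers_iff.mp hx
      have hzz : (ω ^ k) ^ z = (ω ^ z) ^ k := by
        rw [← zpow_natCast ω k, ← zpow_mul, mul_comm, zpow_mul, zpow_natCast]
      exact ⟨ω ^ z, by rw [← hz, hzz]⟩
  have hordk : orderOf (ω ^ k) = n := by
    rw [orderOf_pow, hord, ← hkn]
    have : Nat.gcd (k * n) k = k := by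
      have := Nat.gcd_mul_left k n 1
      simpa [mul_comm] using this
    rw [this, Nat.mul_div_cancel_left n hk]
  have hcardSk : (univ.filter (fun x : Fˣ => ∃ y : Fˣ, x = y ^ k)).card = n := by
    have h1 : univ.filter (fun x : Fˣ => ∃ y : Fˣ, x = y ^ k)
        = univ.filter (fun x : Fˣ => x ∈ Subgroup.zpowers (ω ^ k)) := by
      apply Finset.filter_congr
      intro x _
      exact hSk x
    rw [h1, ← Fintype.card_subtype, ← hordk, ← Fintype.card_zpowers]
  have hfibcard : ∀ i ∈ range k, (univ.filter (fun a : Fˣ => e a % k = i)).card = n := by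
    intro i hi
    have hi' := mem_range.mp hi
    have himg : univ.filter (fun a : Fˣ => e a % k = i)
        = (univ.filter (fun x : Fˣ => ∃ y : Fˣ, x = y ^ k)).image
            (fun x : Fˣ => ω ^ i * x) := by
      ext a
      simp only [mem_filter, mem_univ, true_and, mem_image]
      rw [hfib i hi' a]
      constructor
      · rintro ⟨y, rfl⟩
        exact ⟨y ^ k, ⟨y, rfl⟩, rfl⟩
      · rintro ⟨x, ⟨y, rfl⟩, rfl⟩
        exact ⟨y, rfl⟩
    rw [himg, Finset.card_image_of_injective _ (mul_right_injective (ω ^ i)), hcardSk]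
  -- gaussian periods via gpChar
  have hSigma : ∀ i : ℕ, gaussianPeriod p F ω k i
      = ∑ x ∈ univ.filter (fun x : Fˣ => ∃ y : Fˣ, x = ω ^ i * y ^ k),
          gpChar p F (x : F) := by
    intro i
    exact Finset.sum_congr rfl (fun x _ => gpChar_eq p F _)
  have hRset : univ.filter (fun v : F => ∃ x : Fˣ, v = (x : F) ^ k)
      = (univ.filter (fun x : Fˣ => ∃ y : Fˣ, x = y ^ k)).image
          (fun x : Fˣ => (x : F)) := by
    ext v
    simp only [mem_filter, mem_univ, true_and, mem_image]
    constructor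
    · rintro ⟨x, rfl⟩
      exact ⟨x ^ k, ⟨x, rfl⟩, by push_cast; ring⟩
    · rintro ⟨x, ⟨y, rfl⟩, rfl⟩
      exact ⟨y, by push_cast; ring⟩
  have hcoe_inj : Function.Injective (fun x : Fˣ => (x : F)) := fun a b h => Units.ext h
  have hlamfib : ∀ i ∈ range k, ∀ a : Fˣ, e a % k = i →
      lam (a : F) = gaussianPeriod p F ω k i := by
    intro i hi a ha
    obtain ⟨y0, hy0⟩ := (hfib i (mem_range.mp hi) a).mp ha
    rw [hlam]
    simp only
    rw [hRset, Finset.sum_image (fun x _ y _ h => hcoe_inj h), hSigma i]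
    refine Finset.sum_nbij' (fun x => a * x) (fun z => a⁻¹ * z) ?_ ?_ ?_ ?_ ?_
    · rintro x hx
      simp only [mem_filter, mem_univ, true_and] at hx ⊢
      obtain ⟨y, rfl⟩ := hx
      exact ⟨y0 * y, by rw [hy0, mul_pow, mul_assoc]⟩
    · rintro z hz
      simp only [mem_filter, mem_univ, true_and] at hz ⊢
      obtain ⟨y, rfl⟩ := hz
      refine ⟨y0⁻¹ * y, ?_⟩
      rw [hy0, mul_inv_rev, mul_pow, inv_pow, mul_assoc, inv_mul_cancel_left]
    · intro x _
      exact inv_mul_cancel_left a x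
    · intro z _
      exact mul_inv_cancel_left a z
    · intro x _
      rw [← Units.val_mul]
  have hlam0 : lam (0 : F) = (n : ℂ) := by
    rw [hlam]
    simp only
    rw [Finset.sum_congr rfl (fun v _ => by rw [zero_mul, gpChar_zero p F hp0]),
      Finset.sum_const, hRset, Finset.card_image_of_injective _ hcoe_inj, hcardSk,
      nsmul_eq_mul, mul_one]
  -- assemble the product
  rw [← Finset.mul_prod_erase univ _ (mem_univ (0 : F)), hlam0]
  congr 1
  have hsplit : ∏ a ∈ univ.erase (0 : F), (X - C (lam a))
      = ∏ a : Fˣ, (X - C (lam (a : F))) := by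
    refine (Finset.prod_nbij' (fun a : Fˣ => (a : F))
      (fun v : F => if h : v = 0 then 1 else Units.mk0 v h) ?_ ?_ ?_ ?_ ?_).symm
    · intro a _
      exact Finset.mem_erase.mpr ⟨a.ne_zero, mem_univ _⟩
    · intro v _
      exact mem_univ _
    · intro a _
      simp only [dif_neg a.ne_zero]
      exact Units.ext rfl
    · intro v hv
      have hv0 : v ≠ 0 := (Finset.mem_erase.mp hv).1
      simp only [dif_neg hv0]
      rfl
    · intro a _
      rfl
  rw [hsplit,
    ← Finset.prod_fiberwise_of_maps_to
      (g := fun a : Fˣ => e a % k)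
      (fun a _ => mem_range.mpr (Nat.mod_lt _ hk))
      (fun a => (X : ℂ[X]) - C (lam (a : F)))]
  refine Finset.prod_congr rfl (fun i hi => ?_)
  rw [Finset.prod_congr rfl (fun a ha => by
      rw [hlamfib i hi a (Finset.mem_filter.mp ha).2]),
    Finset.prod_const, hfibcard i hi]
end

section
/- Let p be a prime, q = p^m, and k a positive integer dividing q − 1 with n = (q − 1)/k, and assume q is even or k ∣ (q − 1)/2, so that R_k = −R_k and Γ(k,q) is a simple graph. Then the simple graph Γ(k,q) is connected if and only if η_i ≠ n for every i ∈ {0, …, k − 1}, i.e. no cyclotomic Gaussian period equals the regularity degree n. -/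
open Polynomial Finset
open scoped Classical

/-- The generalized Paley graph `Γ(k,q)` as a simple graph (when the connection
set is symmetric, `fromRel` gives exactly the intended graph). -/
def gpGraph (F : Type) [Field F] (k : ℕ) : SimpleGraph F :=
  SimpleGraph.fromRel fun u v => ∃ x : Fˣ, v - u = (x : F) ^ k

section Aux

variable {F : Type} [Field F] [Fintype F]

private lemma gp_adj_translate {k : ℕ} {u v : F} (a : F) (h : (gpGraph F k).Adj u v) :
    (gpGraph F k).Adj (u + a) (v + a) := by
  rw [gpGraph, SimpleGraph.fromRel_adj] at h ⊢
  simpa [add_sub_add_right_eq_sub] using h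

/-- Translation by `a` as a graph homomorphism of the Paley graph. -/
private def transHom (F : Type) [Field F] [Fintype F] (k : ℕ) (a : F) :
    gpGraph F k →g gpGraph F k :=
  ⟨fun z => z + a, fun h => gp_adj_translate a h⟩

private lemma gp_connected_iff (k : ℕ) :
    (gpGraph F k).Connected ↔
      AddSubgroup.closure {z : F | ∃ x : Fˣ, z = (x : F) ^ k} = ⊤ := by
  set S : Set F := {z : F | ∃ x : Fˣ, z = (x : F) ^ k} with hS
  constructor
  · intro h
    rw [AddSubgroup.eq_top_iff']
    intro v
    obtain ⟨w⟩ := h.preconnected 0 v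
    have key : ∀ (u v : F) (w : (gpGraph F k).Walk u v),
        v - u ∈ AddSubgroup.closure S := by
      intro u v w
      induction w with
      | nil => simpa using (AddSubgroup.closure S).zero_mem
      | @cons a b c hab wbc ih =>
        have h1 : b - a ∈ AddSubgroup.closure S := by
          rw [gpGraph, SimpleGraph.fromRel_adj] at hab
          rcases hab.2 with ⟨x, hx⟩ | ⟨x, hx⟩
          · exact AddSubgroup.subset_closure ⟨x, hx⟩
          · have hmem : a - b ∈ S := ⟨x, hx⟩
            simpa using (AddSubgroup.closure S).neg_mem
              (AddSubgroup.subset_closure hmem)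
        have := (AddSubgroup.closure S).add_mem ih h1
        simpa using this
    simpa using key 0 v w
  · intro h
    have key : ∀ v : F, (gpGraph F k).Reachable 0 v := by
      intro v
      have hv : v ∈ AddSubgroup.closure S := h ▸ AddSubgroup.mem_top v
      refine AddSubgroup.closure_induction ?_ ?_ ?_ ?_ hv
      · rintro s ⟨x, rfl⟩
        apply SimpleGraph.Adj.reachable
        rw [gpGraph, SimpleGraph.fromRel_adj]
        refine ⟨fun h0 => pow_ne_zero k x.ne_zero h0.symm, Or.inl ⟨x, by simp⟩⟩
      · exact SimpleGraph.Reachable.refl 0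
      · intro x y _ _ px py
        have h3 : (gpGraph F k).Reachable (0 + x) (y + x) := py.map (transHom F k x)
        rw [zero_add] at h3
        have h2 : (gpGraph F k).Reachable 0 (y + x) := px.trans h3
        simpa [add_comm] using h2
      · intro x _ px
        have h3 : (gpGraph F k).Reachable (0 + -x) (x + -x) := px.map (transHom F k (-x))
        rw [zero_add, add_neg_cancel] at h3
        exact h3.symm
    exact SimpleGraph.Connected.mk fun u v => (key u).symm.trans (key v)

private lemma closure_eq_top_iff (p : ℕ) [Fact p.Prime] [Algebra (ZMod p) F] (S : Set F) :
    AddSubgroup.closure S = ⊤ ↔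
      ¬ ∃ a : F, a ≠ 0 ∧ ∀ x ∈ S, Algebra.trace (ZMod p) F (a * x) = 0 := by
  haveI : Module.Finite (ZMod p) F := Module.finite_iff_finite.mpr inferInstance
  constructor
  · rintro htop ⟨a, ha, hvan⟩
    have hall : ∀ x : F, Algebra.traceForm (ZMod p) F a x = 0 := by
      intro x
      have hle : AddSubgroup.closure S ≤
          (LinearMap.ker (Algebra.traceForm (ZMod p) F a)).toAddSubgroup :=
        (AddSubgroup.closure_le _).2 (fun s hs => by
          simpa [Algebra.traceForm_apply] using hvan s hs)
      have hx : x ∈ AddSubgroup.closure S := htop ▸ AddSubgroup.mem_top x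
      simpa using hle hx
    exact ha ((traceForm_nondegenerate (ZMod p) F).1 a hall)
  · intro hno
    by_contra hne
    set V : Submodule (ZMod p) F :=
      (AddSubgroup.toZModSubmodule p) (AddSubgroup.closure S) with hV
    have hVlt : V < ⊤ := by
      rcases lt_or_eq_of_le (le_top : V ≤ ⊤) with h | h
      · exact h
      · refine absurd ((AddSubgroup.eq_top_iff' _).2 fun x => ?_) hne
        have hxV : x ∈ V := h ▸ Submodule.mem_top
        exact hxV
    obtain ⟨f, hf0, hfV⟩ := V.exists_dual_map_eq_bot_of_lt_top hVlt inferInstance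
    have hnd := (traceForm_nondegenerate (ZMod p) F).1
    have hinj : Function.Injective (Algebra.traceForm (ZMod p) F) := by
      intro a b hab
      have hz : Algebra.traceForm (ZMod p) F (a - b) = 0 := by
        rw [map_sub, hab, sub_self]
      have := hnd (a - b) (fun y => by rw [hz]; rfl)
      exact sub_eq_zero.mp this
    have hsurj : Function.Surjective
        (Algebra.traceForm (ZMod p) F :
          F →ₗ[ZMod p] Module.Dual (ZMod p) F) :=
      (LinearMap.injective_iff_surjective_of_finrank_eq_finrank
        Subspace.dual_finrank_eq.symm).1 hinj
    obtain ⟨a, ha⟩ := hsurj f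
    refine hno ⟨a, ?_, ?_⟩
    · rintro rfl
      exact hf0 (by rw [← ha, map_zero])
    · intro x hx
      have hxV : x ∈ V := AddSubgroup.subset_closure hx
      have hmap : f x ∈ V.map f := Submodule.mem_map_of_mem hxV
      rw [hfV] at hmap
      have : f x = 0 := Submodule.mem_bot _ |>.1 hmap
      have := ha ▸ this
      simpa [Algebra.traceForm_apply] using this

private lemma coset_card (ω : Fˣ) (hω : ∀ u : Fˣ, u ∈ Subgroup.zpowers ω)
    {k : ℕ} (hk : 0 < k) (hkd : k ∣ Fintype.card Fˣ) (i : ℕ) :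
    (Finset.univ.filter (fun x : Fˣ => ∃ y : Fˣ, x = ω ^ i * y ^ k)).card
      = Fintype.card Fˣ / k := by
  have hfin : ∀ x : Fˣ, IsOfFinOrder x := fun x => isOfFinOrder_of_finite x
  have hset : ∀ x : Fˣ, (∃ y : Fˣ, x = y ^ k) ↔ x ∈ Subgroup.zpowers (ω ^ k) := by
    intro x
    constructor
    · rintro ⟨y, rfl⟩
      obtain ⟨t, ht⟩ := (hfin ω).mem_powers_iff_mem_zpowers.2 (hω y)
      have : y ^ k = (ω ^ k) ^ t := by
        rw [← ht, ← pow_mul, mul_comm, pow_mul]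
      rw [this]
      exact Subgroup.pow_mem _ (Subgroup.mem_zpowers _) t
    · intro hx
      obtain ⟨t, ht⟩ := (hfin (ω ^ k)).mem_powers_iff_mem_zpowers.2 hx
      exact ⟨ω ^ t, by rw [← ht, ← pow_mul, mul_comm, pow_mul]⟩
  have hcard0 : (Finset.univ.filter (fun x : Fˣ => ∃ y : Fˣ, x = y ^ k)).card
      = Fintype.card Fˣ / k := by
    have he : (Finset.univ.filter (fun x : Fˣ => ∃ y : Fˣ, x = y ^ k))
        = Finset.univ.filter (fun x : Fˣ => x ∈ Subgroup.zpowers (ω ^ k)) := by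
      apply Finset.filter_congr
      intro x _
      simpa using hset x
    rw [he, ← Fintype.card_subtype]
    have h1 : Fintype.card {x : Fˣ // x ∈ Subgroup.zpowers (ω ^ k)}
        = orderOf (ω ^ k) := by
      rw [Fintype.card_eq_nat_card]
      exact Nat.card_zpowers _
    rw [h1, orderOf_pow, orderOf_eq_card_of_forall_mem_zpowers hω,
      Nat.card_eq_fintype_card, Nat.gcd_eq_right hkd]
  rw [← hcard0]
  apply Finset.card_nbij' (i := fun x => (ω ^ i)⁻¹ * x) (j := fun x => ω ^ i * x)
  · rintro x hx
    simp only [Finset.mem_coe, Finset.mem_filter, Finset.mem_univ, true_and] at hx ⊢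
    obtain ⟨y, rfl⟩ := hx
    exact ⟨y, by group⟩
  · rintro x hx
    simp only [Finset.mem_coe, Finset.mem_filter, Finset.mem_univ, true_and] at hx ⊢
    obtain ⟨y, rfl⟩ := hx
    exact ⟨y, rfl⟩
  · intro x _
    group
  · intro x _
    group

private lemma period_eq_iff (p : ℕ) [Fact p.Prime] [Algebra (ZMod p) F]
    (ω : Fˣ) (k i n : ℕ)
    (hcard : (Finset.univ.filter (fun x : Fˣ => ∃ y : Fˣ, x = ω ^ i * y ^ k)).card = n) :
    gaussianPeriod p F ω k i = (n : ℂ) ↔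
      ∀ x ∈ Finset.univ.filter (fun x : Fˣ => ∃ y : Fˣ, x = ω ^ i * y ^ k),
        Algebra.trace (ZMod p) F ((x : F)) = 0 := by
  have hp0 : (p : ℝ) ≠ 0 := Nat.cast_ne_zero.2 (Fact.out : p.Prime).pos.ne'
  set T := Finset.univ.filter (fun x : Fˣ => ∃ y : Fˣ, x = ω ^ i * y ^ k) with hT
  have hterm : ∀ x : Fˣ,
      Complex.exp (2 * Real.pi * Complex.I *
        ((Algebra.trace (ZMod p) F (x : F)).val : ℂ) / (p : ℂ))
      = Complex.exp (((2 * Real.pi * ((Algebra.trace (ZMod p) F (x : F)).val : ℝ)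
          / (p : ℝ) : ℝ) : ℂ) * Complex.I) := by
    intro x
    congr 1
    push_cast
    ring
  constructor
  · intro hsum
    intro x hx
    -- take real parts
    have hre : ∑ x ∈ T, Real.cos (2 * Real.pi *
        ((Algebra.trace (ZMod p) F (x : F)).val : ℝ) / (p : ℝ)) = (n : ℝ) := by
      have h1 : (gaussianPeriod p F ω k i).re = (n : ℝ) := by rw [hsum]; simp
      rw [gaussianPeriod, Complex.re_sum, ← hT] at h1
      rw [← h1]
      apply Finset.sum_congr rfl
      intro y _
      rw [hterm y, Complex.exp_ofReal_mul_I_re]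
    have hone : ∀ x ∈ T, Real.cos (2 * Real.pi *
        ((Algebra.trace (ZMod p) F (x : F)).val : ℝ) / (p : ℝ)) = 1 := by
      have hle : ∀ x ∈ T, Real.cos (2 * Real.pi *
          ((Algebra.trace (ZMod p) F (x : F)).val : ℝ) / (p : ℝ)) ≤ 1 :=
        fun x _ => Real.cos_le_one _
      have hsum1 : ∑ x ∈ T, Real.cos (2 * Real.pi *
          ((Algebra.trace (ZMod p) F (x : F)).val : ℝ) / (p : ℝ))
          = ∑ _x ∈ T, (1 : ℝ) := by
        rw [hre]
        simp [hcard]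
      exact fun x hx => (Finset.sum_eq_sum_iff_of_le hle).1 hsum1 x hx
    have hcos := hone x hx
    obtain ⟨z, hz⟩ := (Real.cos_eq_one_iff _).1 hcos
    set v : ℕ := (Algebra.trace (ZMod p) F (x : F)).val with hv
    have hveq : (v : ℝ) = (z : ℝ) * p := by
      have hppos : (0 : ℝ) < p := by positivity
      have hpi : (0 : ℝ) < Real.pi := Real.pi_pos
      field_simp at hz
      nlinarith [hz]
    have hvlt : (v : ℝ) < p := by
      exact_mod_cast ZMod.val_lt (Algebra.trace (ZMod p) F (x : F))
    have hvnn : (0 : ℝ) ≤ (v : ℝ) := Nat.cast_nonneg v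
    have hz0 : z = 0 := by
      have hppos : (0 : ℝ) < p := by positivity
      rcases lt_trichotomy z 0 with h | h | h
      · have hz1 : z ≤ -1 := by omega
        have : (z : ℝ) ≤ -1 := by exact_mod_cast hz1
        nlinarith
      · exact h
      · have : (1 : ℝ) ≤ (z : ℝ) := by exact_mod_cast h
        nlinarith
    have hv0 : v = 0 := by
      have : (v : ℝ) = 0 := by rw [hveq, hz0]; simp
      exact_mod_cast this
    exact (ZMod.val_eq_zero _).1 hv0
  · intro hvan
    rw [gaussianPeriod, ← hT]
    have : ∀ x ∈ T, Complex.exp (2 * Real.pi * Complex.I *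
        ((Algebra.trace (ZMod p) F (x : F)).val : ℂ) / (p : ℂ)) = 1 := by
      intro x hx
      rw [hvan x hx]
      simp
    rw [Finset.sum_congr rfl this]
    simp [hcard]

private lemma exists_iff (p : ℕ) [Fact p.Prime] [Algebra (ZMod p) F] (ω : Fˣ)
    (hω : ∀ u : Fˣ, u ∈ Subgroup.zpowers ω) {k : ℕ} (hk : 0 < k) :
    (∃ a : F, a ≠ 0 ∧ ∀ x ∈ {z : F | ∃ x : Fˣ, z = (x : F) ^ k},
        Algebra.trace (ZMod p) F (a * x) = 0)
      ↔ ∃ i < k, ∀ x ∈ Finset.univ.filter (fun x : Fˣ => ∃ y : Fˣ, x = ω ^ i * y ^ k),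
          Algebra.trace (ZMod p) F ((x : F)) = 0 := by
  have hfin : ∀ x : Fˣ, IsOfFinOrder x := fun x => isOfFinOrder_of_finite x
  constructor
  · rintro ⟨a, ha, hvan⟩
    set u : Fˣ := Units.mk0 a ha with hu
    obtain ⟨j, hj0⟩ := (hfin ω).mem_powers_iff_mem_zpowers.2 (hω u)
    have hj : ω ^ j = u := hj0
    refine ⟨j % k, Nat.mod_lt _ hk, ?_⟩
    intro x hx
    simp only [Finset.mem_filter, Finset.mem_univ, true_and] at hx
    obtain ⟨y, rfl⟩ := hx
    have hunit : ω ^ j * ((ω ^ (j / k))⁻¹ * y) ^ k = ω ^ (j % k) * y ^ k := by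
      have hj2 : j % k + k * (j / k) = j := Nat.mod_add_div j k
      nth_rewrite 1 [← hj2]
      rw [pow_add, mul_pow, inv_pow, ← pow_mul, mul_comm (j / k) k, mul_assoc,
        mul_inv_cancel_left]
    have hs : (((ω ^ (j / k))⁻¹ * y : Fˣ) : F) ^ k
        ∈ {z : F | ∃ x : Fˣ, z = (x : F) ^ k} := ⟨(ω ^ (j / k))⁻¹ * y, rfl⟩
    have := hvan _ hs
    have hcoe : a * (((ω ^ (j / k))⁻¹ * y : Fˣ) : F) ^ k
        = ((ω ^ (j % k) * y ^ k : Fˣ) : F) := by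
      rw [← hunit]
      have : a = ((ω ^ j : Fˣ) : F) := by rw [hj]; rfl
      rw [this]
      push_cast
      ring
    rwa [hcoe] at this
  · rintro ⟨i, _, hvan⟩
    refine ⟨((ω ^ i : Fˣ) : F), Units.ne_zero _, ?_⟩
    rintro x ⟨z, rfl⟩
    have hmem : (ω ^ i * z ^ k : Fˣ) ∈
        Finset.univ.filter (fun x : Fˣ => ∃ y : Fˣ, x = ω ^ i * y ^ k) := by
      simp only [Finset.mem_filter, Finset.mem_univ, true_and]
      exact ⟨z, rfl⟩
    have := hvan _ hmem
    have hcoe : ((ω ^ i : Fˣ) : F) * ((z : Fˣ) : F) ^ k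
        = ((ω ^ i * z ^ k : Fˣ) : F) := by push_cast; ring
    rwa [hcoe]

end Aux

theorem stmt_2 (p m k n : ℕ) (hp : p.Prime) (hm : 0 < m)
    (F : Type) [Field F] [Fintype F] [Algebra (ZMod p) F]
    (hF : Fintype.card F = p ^ m)
    (ω : Fˣ) (hω : ∀ u : Fˣ, u ∈ Subgroup.zpowers ω)
    (hk : 0 < k) (hkq : k ∣ p ^ m - 1) (hn : n = (p ^ m - 1) / k)
    (hsym : Even (p ^ m) ∨ k ∣ (p ^ m - 1) / 2) :
    (gpGraph F k).Connected ↔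
      ∀ i < k, gaussianPeriod p F ω k i ≠ (n : ℂ) := by
  haveI : Fact p.Prime := ⟨hp⟩
  have hq1 : Fintype.card Fˣ = p ^ m - 1 := by
    rw [Fintype.card_units, hF]
  have hkd : k ∣ Fintype.card Fˣ := by rw [hq1]; exact hkq
  have hcard : ∀ i : ℕ,
      (Finset.univ.filter (fun x : Fˣ => ∃ y : Fˣ, x = ω ^ i * y ^ k)).card = n := by
    intro i
    rw [coset_card ω hω hk hkd i, hq1, hn]
  rw [gp_connected_iff, closure_eq_top_iff p, exists_iff p ω hω hk]
  constructor
  · intro h i hik heq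
    exact h ⟨i, hik, (period_eq_iff p ω k i n (hcard i)).1 heq⟩
  · rintro h ⟨i, hik, hvan⟩
    exact h i hik ((period_eq_iff p ω k i n (hcard i)).2 hvan)
end

section
/- Let p be a prime, q = p^m, and k a positive integer with k ∣ q − 1. If k does not divide (q − 1)/(p − 1), then there exists an index j ∈ {0, …, k − 1} such that the cyclotomic Gaussian period η_j is not a rational number. -/
open Polynomial Finset
open scoped Classical

/-- If an integer combination of powers of a primitive p-th root of unity is rational,
then the coefficients at exponents 1,…,p-1 are all equal. -/
lemma aux_coeffs_eq {p : ℕ} (hp : p.Prime) {ζ : ℂ} (hζ : IsPrimitiveRoot ζ p)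
    (n : ℕ → ℤ) (r : ℚ)
    (hr : ∑ i ∈ range p, (n i : ℂ) * ζ ^ i = (r : ℂ)) :
    ∀ i, 1 ≤ i → i < p → n i = n (p - 1) := by
  haveI : Fact p.Prime := ⟨hp⟩
  set P : ℚ[X] := (∑ i ∈ range p, C ((n i : ℚ)) * X ^ i) - C r with hP
  have hcoeff : ∀ j, 1 ≤ j → j < p → P.coeff j = (n j : ℚ) := by
    intro j hj1 hjp
    simp only [hP, coeff_sub, finset_sum_coeff, coeff_C_mul, coeff_X_pow, coeff_C,
      mul_ite, mul_one, mul_zero]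
    rw [Finset.sum_ite_eq (range p) j fun i => ((n i : ℚ))]
    rw [if_pos (Finset.mem_range.mpr hjp), if_neg (by omega : ¬ j = 0)]
    ring
  have hev : aeval ζ P = 0 := by
    simp only [hP, map_sub, map_sum, map_mul, aeval_C, aeval_X_pow]
    have : ∀ i, (algebraMap ℚ ℂ) ((n i : ℚ)) = ((n i : ℤ) : ℂ) := by
      intro i
      rw [eq_ratCast (algebraMap ℚ ℂ)]
      push_cast
      ring
    simp only [this]
    rw [hr]
    rw [eq_ratCast (algebraMap ℚ ℂ)]
    ring
  have hdvd : minpoly ℚ ζ ∣ P := minpoly.dvd ℚ ζ hev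
  rw [← cyclotomic_eq_minpoly_rat hζ hp.pos] at hdvd
  by_cases hP0 : P = 0
  · intro i h1 h2
    have e1 : P.coeff i = (n i : ℚ) := hcoeff i h1 h2
    have e2 : P.coeff (p - 1) = (n (p - 1) : ℚ) := by
      apply hcoeff <;> omega
    rw [hP0] at e1 e2
    simp only [coeff_zero] at e1 e2
    exact_mod_cast e1.symm.trans e2
  · obtain ⟨Q, hQ⟩ := hdvd
    have hdegP : P.natDegree ≤ p - 1 := by
      apply natDegree_le_iff_coeff_eq_zero.mpr
      intro j hj
      have hjp : p ≤ j := by omega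
      simp only [hP, coeff_sub, finset_sum_coeff, coeff_C_mul, coeff_X_pow, coeff_C,
        mul_ite, mul_one, mul_zero]
      rw [Finset.sum_ite_eq (range p) j fun i => ((n i : ℚ))]
      have : j ∉ range p := by simp; omega
      simp [this]
      omega
    have hcycdeg : (cyclotomic p ℚ).natDegree = p - 1 := by
      rw [natDegree_cyclotomic, Nat.totient_prime hp]
    have hQ0 : Q ≠ 0 := by
      intro hq; apply hP0; rw [hQ, hq, mul_zero]
    have hdegQ : Q.natDegree = 0 := by
      have := natDegree_mul (cyclotomic_ne_zero p ℚ) hQ0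
      rw [← hQ, hcycdeg] at this
      omega
    obtain ⟨a, ha⟩ : ∃ a : ℚ, Q = C a := ⟨Q.coeff 0, (Polynomial.eq_C_of_natDegree_eq_zero hdegQ)⟩
    have hcoeffcyc : ∀ j, j < p → P.coeff j = a := by
      intro j hj
      rw [hQ, ha, coeff_mul_C, cyclotomic_prime ℚ p]
      simp only [finset_sum_coeff, coeff_X_pow]
      rw [Finset.sum_ite_eq (range p) j fun _ => (1:ℚ)]
      simp [Finset.mem_range.mpr hj]
    intro i h1 h2
    have e1 := hcoeff i h1 h2
    have e2 : P.coeff (p - 1) = (n (p-1) : ℚ) := by apply hcoeff <;> omega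
    have f1 := hcoeffcyc i h2
    have f2 : P.coeff (p-1) = a := by apply hcoeffcyc; omega
    have : (n i : ℚ) = (n (p-1) : ℚ) := by rw [← e1, ← e2, f1, f2]
    exact_mod_cast this

section psisec
variable (p : ℕ) [Fact p.Prime] (F : Type) [Field F] [Fintype F] [Algebra (ZMod p) F]

noncomputable def eeC : ZMod p → ℂ :=
  fun t => Complex.exp (2 * Real.pi * Complex.I / p) ^ t.val

variable {p}

lemma hzeta : IsPrimitiveRoot (Complex.exp (2 * Real.pi * Complex.I / p)) p :=
  Complex.isPrimitiveRoot_exp p (Fact.out : p.Prime).ne_zero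

lemma eeC_zero : eeC p (0 : ZMod p) = 1 := by
  simp [eeC, ZMod.val_zero]

lemma eeC_natCast (i : ℕ) : eeC p (i : ZMod p) =
    Complex.exp (2 * Real.pi * Complex.I / p) ^ i := by
  have hp : p.Prime := Fact.out
  have h1 : (i : ZMod p).val = i % p := ZMod.val_natCast p i
  rw [eeC, h1]
  conv_rhs => rw [← Nat.mod_add_div i p]
  rw [pow_add, pow_mul, hzeta.pow_eq_one, one_pow, mul_one]

lemma eeC_add (s t : ZMod p) : eeC p (s + t) = eeC p s * eeC p t := by
  have hs : s = ((s.val : ℕ) : ZMod p) := (ZMod.natCast_rightInverse s).symm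
  have ht : t = ((t.val : ℕ) : ZMod p) := (ZMod.natCast_rightInverse t).symm
  calc eeC p (s + t) = eeC p (((s.val + t.val : ℕ) : ZMod p)) := by
        rw [Nat.cast_add]; congr 1
        · rw [← hs, ← ht]
      _ = _ := by
        rw [eeC_natCast, pow_add, ← eeC_natCast, ← eeC_natCast, ← hs, ← ht]

variable {F}

noncomputable def psiC (p : ℕ) [Fact p.Prime] (F : Type) [Field F] [Fintype F]
    [Algebra (ZMod p) F] : F → ℂ :=
  fun x => eeC p (Algebra.trace (ZMod p) F x)

lemma psiC_add (x y : F) : psiC p F (x + y) = psiC p F x * psiC p F y := by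
  rw [psiC, map_add, eeC_add]; rfl

lemma psiC_zero : psiC p F 0 = 1 := by
  rw [psiC, map_zero, eeC_zero]

lemma trace_exists_ne_zero : ∃ y : F, Algebra.trace (ZMod p) F y ≠ 0 := by
  have hp : p.Prime := Fact.out
  have hchar : CharP F p := charP_of_injective_ringHom (algebraMap (ZMod p) F).injective p
  have hring : p = ringChar F := (ringChar.eq F p).symm
  subst hring
  obtain ⟨b, hb⟩ := FiniteField.trace_to_zmod_nondegenerate F (one_ne_zero : (1:F) ≠ 0)
  exact ⟨1 * b, hb⟩

lemma psiC_exists_ne_one : ∃ y : F, psiC p F y ≠ 1 := by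
  have hp : p.Prime := Fact.out
  obtain ⟨y, hy⟩ := trace_exists_ne_zero (p := p) (F := F)
  refine ⟨y, ?_⟩
  rw [psiC, eeC]
  have hvpos : 0 < (Algebra.trace (ZMod p) F y).val := by
    rcases Nat.eq_zero_or_pos (Algebra.trace (ZMod p) F y).val with h0 | h
    · exact absurd (((ZMod.val_eq_zero _).mp h0)) hy
    · exact h
  exact hzeta.pow_ne_one_of_pos_of_lt hvpos.ne' (ZMod.val_lt _)

lemma sum_psiC_eq_zero_aux : ∑ c : F, psiC p F c = 0 := by
  obtain ⟨y, hy⟩ := psiC_exists_ne_one (p := p) (F := F)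
  have h2 : psiC p F y * ∑ c : F, psiC p F c = ∑ c : F, psiC p F c := by
    rw [Finset.mul_sum]
    rw [← Equiv.sum_comp (Equiv.addLeft y) (fun c => psiC p F c)]
    apply Finset.sum_congr rfl
    intro c _
    rw [← psiC_add]
    rfl
  by_contra hS
  exact hy (mul_right_cancel₀ hS (h2.trans (one_mul _).symm))

lemma sum_psiC_eq_zero {x : F} (hx : x ≠ 0) : ∑ c : F, psiC p F (c * x) = 0 := by
  have h1 : ∑ c : F, psiC p F (c * x) = ∑ c : F, psiC p F c := by
    exact Fintype.sum_bijective (fun c : F => c * x) (mulRight_bijective₀ x hx)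
      _ _ (fun c => rfl)
  rw [h1, sum_psiC_eq_zero_aux]

lemma sum_psiC (x : F) : ∑ c : F, psiC p F (c * x) =
    if x = 0 then (Fintype.card F : ℂ) else 0 := by
  by_cases hx : x = 0
  · subst hx
    simp only [mul_zero, psiC_zero, Finset.sum_const, Finset.card_univ, nsmul_eq_mul, mul_one,
      if_pos]
  · rw [if_neg hx, sum_psiC_eq_zero hx]

end psisec

section mainsec
variable {p : ℕ} [Fact p.Prime] {F : Type} [Field F] [Fintype F] [Algebra (ZMod p) F]

lemma aux_zmod_coeffs (n : ZMod p → ℤ) (r : ℚ)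
    (hr : ∑ t : ZMod p, (n t : ℂ) * eeC p t = (r : ℂ)) :
    ∀ s t : ZMod p, s ≠ 0 → t ≠ 0 → n s = n t := by
  have hp : p.Prime := Fact.out
  have hconv : ∑ t : ZMod p, (n t : ℂ) * eeC p t
      = ∑ i ∈ range p, ((n (i : ZMod p) : ℤ) : ℂ) *
        Complex.exp (2 * Real.pi * Complex.I / p) ^ i := by
    apply Finset.sum_nbij' (i := fun (t : ZMod p) => t.val) (j := fun (i : ℕ) => (i : ZMod p))
    · intro t _; exact Finset.mem_range.mpr (ZMod.val_lt t)
    · intro i _; exact Finset.mem_univ _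
    · intro t _; exact ZMod.natCast_rightInverse t
    · intro i hi; exact ZMod.val_natCast_of_lt (Finset.mem_range.mp hi)
    · intro t _
      rw [ZMod.natCast_rightInverse t]
      rfl
  rw [hconv] at hr
  have key := aux_coeffs_eq hp (hzeta (p := p)) (fun i => n (i : ZMod p)) r hr
  have key' : ∀ s : ZMod p, s ≠ 0 → n s = n ((p - 1 : ℕ) : ZMod p) := by
    intro s hs
    have h1 : 1 ≤ s.val := by
      rcases Nat.eq_zero_or_pos s.val with h0 | h; · exact absurd ((ZMod.val_eq_zero _).mp h0) hs
      exact h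
    have h2 := key s.val h1 (ZMod.val_lt s)
    rwa [ZMod.natCast_rightInverse s] at h2
  intro s t hs ht
  rw [key' s hs, key' t ht]

/-- If the "eigenvalue" at `c` is rational, multiplying `c` by a scalar from the
prime field does not change it. -/
lemma aux_shift (S : Finset F) (c : F) (u : (ZMod p)ˣ)
    (hrat : ∃ r : ℚ, (∑ s ∈ S, psiC p F (c * s)) = (r : ℂ)) :
    ∑ s ∈ S, psiC p F ((algebraMap (ZMod p) F u) * (c * s)) = ∑ s ∈ S, psiC p F (c * s) := by
  obtain ⟨r, hr⟩ := hrat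
  set Tr := Algebra.trace (ZMod p) F with hTr
  set n : ZMod p → ℤ := fun t => ((S.filter (fun s => Tr (c * s) = t)).card : ℤ) with hn
  have hfib : ∀ g : ZMod p → ℂ, ∑ s ∈ S, g (Tr (c * s)) = ∑ t : ZMod p, (n t : ℂ) * g t := by
    intro g
    rw [← Finset.sum_fiberwise S (fun s => Tr (c * s)) (fun s => g (Tr (c * s)))]
    apply Finset.sum_congr rfl
    intro t _
    rw [Finset.sum_congr rfl (fun s hs => by
      rw [(Finset.mem_filter.mp hs).2])]
    rw [Finset.sum_const, hn]
    push_cast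
    ring
  have h1 : ∑ s ∈ S, psiC p F (c * s) = ∑ t : ZMod p, (n t : ℂ) * eeC p t := hfib (eeC p)
  have hcounts := aux_zmod_coeffs n r (h1 ▸ hr)
  have htr_smul : ∀ s : F, Tr ((algebraMap (ZMod p) F u) * (c * s)) = (u : ZMod p) * Tr (c * s) := by
    intro s
    rw [hTr, ← Algebra.smul_def, map_smul, smul_eq_mul]
  have h2 : ∑ s ∈ S, psiC p F ((algebraMap (ZMod p) F u) * (c * s))
      = ∑ t : ZMod p, (n t : ℂ) * eeC p ((u : ZMod p) * t) := by
    calc ∑ s ∈ S, psiC p F ((algebraMap (ZMod p) F u) * (c * s))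
        = ∑ s ∈ S, eeC p ((u : ZMod p) * Tr (c * s)) := by
          apply Finset.sum_congr rfl; intro s _; rw [psiC, htr_smul s]
      _ = _ := hfib (fun t => eeC p ((u : ZMod p) * t))
  rw [h2, h1]
  have hterm : ∀ t : ZMod p, (n t : ℂ) * eeC p ((u : ZMod p) * t)
      = (n ((u : ZMod p) * t) : ℂ) * eeC p ((u : ZMod p) * t) := by
    intro t
    by_cases ht : t = 0
    · subst ht; rw [mul_zero]
    · have hu0 : (u : ZMod p) ≠ 0 := u.ne_zero
      have hut : (u : ZMod p) * t ≠ 0 := mul_ne_zero hu0 ht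
      rw [hcounts t ((u : ZMod p) * t) ht hut]
  rw [Finset.sum_congr rfl (fun t _ => hterm t)]
  exact Fintype.sum_bijective (fun t : ZMod p => (u : ZMod p) * t)
    (mulLeft_bijective₀ _ u.ne_zero) _ _ (fun t => rfl)

lemma aux_stable (S : Finset F) (u : (ZMod p)ˣ)
    (hrat : ∀ c : F, ∃ r : ℚ, (∑ s ∈ S, psiC p F (c * s)) = (r : ℂ)) (x : F) :
    ((algebraMap (ZMod p) F u) * x ∈ S ↔ x ∈ S) := by
  set a : F := algebraMap (ZMod p) F u with haa
  have ha : a ≠ 0 := by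
    rw [haa]
    simp only [ne_eq, map_eq_zero_iff _ (algebraMap (ZMod p) F).injective]
    exact u.ne_zero
  have hq0 : ((Fintype.card F : ℂ)) ≠ 0 := Nat.cast_ne_zero.mpr Fintype.card_ne_zero
  have q1 : ∀ y : F, ∑ c : F, ∑ s ∈ S, psiC p F (c * (s - y))
      = if y ∈ S then (Fintype.card F : ℂ) else 0 := by
    intro y
    rw [Finset.sum_comm]
    calc ∑ s ∈ S, ∑ c : F, psiC p F (c * (s - y))
        = ∑ s ∈ S, if s = y then (Fintype.card F : ℂ) else 0 := by
          apply Finset.sum_congr rfl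
          intro s _
          rw [sum_psiC (s - y)]
          simp [sub_eq_zero]
      _ = _ := by
          rw [Finset.sum_ite_eq' S y (fun _ => (Fintype.card F : ℂ))]
  have hainv : (algebraMap (ZMod p) F) ((u⁻¹ : (ZMod p)ˣ) : ZMod p) = a⁻¹ := by
    rw [haa]
    rw [← map_inv₀ (algebraMap (ZMod p) F)]
    congr 1
    exact u.val_inv_eq_inv_val
  have q2 : ∑ c : F, ∑ s ∈ S, psiC p F (c * (s - a * x))
      = ∑ c : F, ∑ s ∈ S, psiC p F (c * (s - x)) := by
    rw [← Equiv.sum_comp (Equiv.mulLeft₀ a⁻¹ (inv_ne_zero ha))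
      (fun c => ∑ s ∈ S, psiC p F (c * (s - a * x)))]
    apply Finset.sum_congr rfl
    intro c _
    have hsplit : ∀ s : F, (Equiv.mulLeft₀ a⁻¹ (inv_ne_zero ha)) c * (s - a * x)
        = a⁻¹ * (c * s) + (-(c * x)) := by
      intro s
      simp only [Equiv.mulLeft₀_apply]
      field_simp
      ring
    calc ∑ s ∈ S, psiC p F ((Equiv.mulLeft₀ a⁻¹ (inv_ne_zero ha)) c * (s - a * x))
        = ∑ s ∈ S, psiC p F (a⁻¹ * (c * s)) * psiC p F (-(c * x)) := by
          apply Finset.sum_congr rfl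
          intro s _
          rw [hsplit s, psiC_add]
      _ = (∑ s ∈ S, psiC p F (a⁻¹ * (c * s))) * psiC p F (-(c * x)) := by
          rw [← Finset.sum_mul]
      _ = (∑ s ∈ S, psiC p F (c * s)) * psiC p F (-(c * x)) := by
          rw [← hainv]
          rw [aux_shift S c u⁻¹ (hrat c)]
      _ = ∑ s ∈ S, psiC p F (c * (s - x)) := by
          rw [Finset.sum_mul]
          apply Finset.sum_congr rfl
          intro s _
          rw [← psiC_add]
          congr 1
          ring
  have := (q1 (a * x)).symm.trans (q2.trans (q1 x))
  by_cases h1 : a * x ∈ S <;> by_cases h2 : x ∈ S <;>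
    simp only [h1, h2, if_true, if_false] at this ⊢ <;> tauto

end mainsec

theorem stmt_8 (p m k : ℕ) (hp : p.Prime) (hm : 0 < m)
    (F : Type) [Field F] [Fintype F] [Algebra (ZMod p) F]
    (hF : Fintype.card F = p ^ m)
    (ω : Fˣ) (hω : ∀ u : Fˣ, u ∈ Subgroup.zpowers ω)
    (hk : 0 < k) (hkq : k ∣ p ^ m - 1)
    (h : ¬ k ∣ (p ^ m - 1) / (p - 1)) :
    ∃ j < k, ∀ r : ℚ, gaussianPeriod p F ω k j ≠ (r : ℂ) := by
  haveI : Fact p.Prime := ⟨hp⟩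
  by_contra hcon
  push_neg at hcon
  -- hcon : ∀ j < k, ∃ r : ℚ, gaussianPeriod p F ω k j = r
  have hord : orderOf ω = p ^ m - 1 := by
    rw [orderOf_eq_card_of_forall_mem_zpowers hω, Nat.card_eq_fintype_card,
      Fintype.card_units, hF]
  have hpsi_exp : ∀ x : F,
      Complex.exp (2 * Real.pi * Complex.I *
        ((Algebra.trace (ZMod p) F x).val : ℂ) / (p : ℂ)) = psiC p F x := by
    intro x
    rw [psiC, eeC, ← Complex.exp_nat_mul]
    congr 1
    ring
  set T : Finset Fˣ := Finset.univ.filter (fun x : Fˣ => ∃ y : Fˣ, x = y ^ k) with hT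
  set S : Finset F := T.image (fun x : Fˣ => (x : F)) with hS
  have hSsum : ∀ c : F, ∑ s ∈ S, psiC p F (c * s) = ∑ x ∈ T, psiC p F (c * (x : F)) := by
    intro c
    rw [hS, Finset.sum_image (fun x _ y _ hxy => Units.ext hxy)]
  -- rationality of all Fourier coefficients of S
  have hrat : ∀ c : F, ∃ r : ℚ, (∑ s ∈ S, psiC p F (c * s)) = (r : ℂ) := by
    intro c
    by_cases hc : c = 0
    · refine ⟨(S.card : ℚ), ?_⟩
      subst hc
      simp only [zero_mul, psiC_zero, Finset.sum_const, nsmul_eq_mul, mul_one]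
      push_cast
      ring
    · set cu : Fˣ := Units.mk0 c hc with hcu0
      have hcuc : (cu : F) = c := rfl
      obtain ⟨n, hn⟩ := (Submonoid.mem_powers_iff _ _).mp
        (mem_powers_iff_mem_zpowers.mpr (hω cu))
      set j := n % k with hj
      have hjk : j < k := Nat.mod_lt _ hk
      obtain ⟨r, hr⟩ := hcon j hjk
      refine ⟨r, ?_⟩
      rw [← hr, gaussianPeriod]
      rw [Finset.sum_congr rfl (fun x _ => hpsi_exp ((x : Fˣ) : F))]
      rw [hSsum c]
      have hcu : cu = (ω ^ (n / k)) ^ k * ω ^ j := by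
        rw [← hn, ← pow_mul, ← pow_add]
        congr 1
        rw [hj]
        exact (Nat.div_add_mod' n k).symm
      apply Finset.sum_nbij' (i := fun x : Fˣ => cu * x) (j := fun y : Fˣ => cu⁻¹ * y)
      · intro x hx
        obtain ⟨y, hy⟩ := (Finset.mem_filter.mp hx).2
        rw [Finset.mem_filter]
        refine ⟨Finset.mem_univ _, ⟨ω ^ (n / k) * y, ?_⟩⟩
        rw [hy, hcu, mul_pow, mul_assoc, mul_left_comm]
      · intro y hy
        obtain ⟨z, hz⟩ := (Finset.mem_filter.mp hy).2
        rw [hT, Finset.mem_filter]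
        refine ⟨Finset.mem_univ _, ⟨(ω ^ (n / k))⁻¹ * z, ?_⟩⟩
        rw [hz, hcu, mul_pow, inv_pow, mul_inv]
        group
      · intro x _; rw [inv_mul_cancel_left]
      · intro y _; rw [mul_inv_cancel_left]
      · intro x _
        show psiC p F (c * (x : F)) = psiC p F ((cu * x : Fˣ) : F)
        rw [Units.val_mul, hcuc]
  -- the element ω ^ d lies in the prime field
  set d := (p ^ m - 1) / (p - 1) with hd
  have hdvd1 : (p - 1) ∣ (p ^ m - 1) := by
    simpa using Nat.sub_dvd_pow_sub_pow p 1 m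
  have hdmul : d * (p - 1) = p ^ m - 1 := Nat.div_mul_cancel hdvd1
  set x₀ : F := ((ω ^ d : Fˣ) : F) with hx₀
  have hx₀ne : x₀ ≠ 0 := Units.ne_zero _
  have hx₀p1 : x₀ ^ (p - 1) = 1 := by
    rw [hx₀, ← Units.val_pow_eq_pow_val, ← pow_mul, hdmul, ← hord, pow_orderOf_eq_one,
      Units.val_one]
  have hx₀p : x₀ ^ p = x₀ := by
    have hp1 : p - 1 + 1 = p := Nat.succ_pred_eq_of_pos hp.pos
    rw [← hp1, pow_succ, hx₀p1, one_mul]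
  obtain ⟨c₀, hc₀⟩ : ∃ c₀ : ZMod p, algebraMap (ZMod p) F c₀ = x₀ := by
    classical
    set f : F[X] := X ^ p - X with hf
    have hfc : f.coeff p = 1 := by
      rw [hf, coeff_sub, coeff_X_pow, if_pos rfl, coeff_X, if_neg (by have := hp.two_le; omega : ¬ 1 = p)]
      ring
    have hfne : f ≠ 0 := fun h0 => by simp [h0] at hfc
    have hdegf : f.natDegree ≤ p := by
      refine le_trans (natDegree_sub_le _ _) ?_
      simp only [natDegree_X_pow, natDegree_X]
      have := hp.pos
      omega
    set R : Finset F := f.roots.toFinset with hR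
    set T0 : Finset F := (Finset.univ : Finset (ZMod p)).image (algebraMap (ZMod p) F) with hT0
    have hT0card : T0.card = p := by
      rw [hT0, Finset.card_image_of_injective _ (algebraMap (ZMod p) F).injective,
        Finset.card_univ, ZMod.card]
    have hroot : ∀ b : F, b ^ p = b → b ∈ R := by
      intro b hb
      rw [hR, Multiset.mem_toFinset, mem_roots hfne]
      simp [hf, IsRoot, hb]
    have hT0sub : T0 ⊆ R := by
      intro b hb
      obtain ⟨a, _, ha⟩ := Finset.mem_image.mp hb
      apply hroot
      rw [← ha, ← map_pow, ZMod.pow_card]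
    have hRcard : R.card ≤ p := by
      refine le_trans (Multiset.toFinset_card_le _) (le_trans ?_ hdegf)
      exact_mod_cast card_roots' f
    have hT0R : T0 = R := Finset.eq_of_subset_of_card_le hT0sub (hRcard.trans_eq hT0card.symm)
    have hx₀R : x₀ ∈ R := hroot x₀ hx₀p
    rw [← hT0R] at hx₀R
    obtain ⟨a, _, ha⟩ := Finset.mem_image.mp hx₀R
    exact ⟨a, ha⟩
  have hc₀ne : c₀ ≠ 0 := by
    intro h0
    apply hx₀ne
    rw [← hc₀, h0, map_zero]
  set u : (ZMod p)ˣ := Units.mk0 c₀ hc₀ne with hu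
  have hstable := aux_stable S u hrat 1
  have h1S : (1 : F) ∈ S := by
    rw [hS, Finset.mem_image]
    refine ⟨1, ?_, Units.val_one⟩
    rw [hT, Finset.mem_filter]
    exact ⟨Finset.mem_univ _, ⟨1, (one_pow k).symm⟩⟩
  have hx₀S : x₀ ∈ S := by
    have : (algebraMap (ZMod p) F) ((u : ZMod p)) * 1 = x₀ := by
      rw [mul_one, hu]
      exact hc₀
    rw [← this]
    exact hstable.mpr h1S
  obtain ⟨x', hx'T, hx'⟩ := Finset.mem_image.mp hx₀S
  obtain ⟨y, hy⟩ := (Finset.mem_filter.mp hx'T).2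
  have hunits : ω ^ d = y ^ k := by
    apply Units.ext
    rw [← hx₀, ← hx', hy]
  obtain ⟨s, hs⟩ := (Submonoid.mem_powers_iff _ _).mp
    (mem_powers_iff_mem_zpowers.mpr (hω y))
  have hpow : ω ^ d = ω ^ (s * k) := by
    rw [hunits, ← hs, ← pow_mul]
  have hmod : d ≡ s * k [MOD orderOf ω] := pow_eq_pow_iff_modEq.mp hpow
  rw [hord] at hmod
  have hmodk : d ≡ s * k [MOD k] := Nat.ModEq.of_dvd hkq hmod
  have hzero : s * k ≡ 0 [MOD k] := (Nat.modEq_zero_iff_dvd).mpr ⟨s, mul_comm s k⟩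
  exact h ((Nat.modEq_zero_iff_dvd).mp (hmodk.trans hzero))
end

section
/- Let p be a prime and let k, t, s be positive integers such that k divides p^t + 1. If m = 2ts, then k divides (p^m − 1)/(p − 1). Consequently, every semiprimitive generalized Paley graph Γ(k, p^m) has integral spectrum. -/
open Polynomial Finset
open scoped Classical

lemma geomsum_block {R : Type*} [CommRing R] (x : R) (a b : ℕ) :
    ∑ i ∈ range (a*b), x^i = (∑ j ∈ range b, (x^a)^j) * ∑ i ∈ range a, x^i := by
  induction b with
  | zero => simp
  | succ n ih =>
    rw [Nat.mul_succ, Finset.sum_range_add, ih, Finset.sum_range_succ, add_mul]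
    congr 1
    rw [← pow_mul, Finset.mul_sum]
    exact Finset.sum_congr rfl fun i _ => by rw [pow_add]

lemma key_dvd (p k t s : ℕ) (hdvd : k ∣ p^t + 1) :
    k ∣ ∑ i ∈ range (2*t*s), p ^ i := by
  rw [← ZMod.natCast_eq_zero_iff]
  push_cast
  have hx : ((p : ZMod k))^t = -1 := by
    have h0 : ((p^t + 1 : ℕ) : ZMod k) = 0 := (ZMod.natCast_eq_zero_iff _ _).mpr hdvd
    push_cast at h0
    linear_combination h0
  have h2t : ∑ i ∈ range (2*t), (p : ZMod k)^i = 0 := by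
    rw [two_mul, Finset.sum_range_add]
    have : ∀ i ∈ range t, (p : ZMod k) ^ (t + i) = -(p : ZMod k) ^ i := fun i _ => by
      rw [pow_add, hx, neg_one_mul]
    rw [Finset.sum_congr rfl this, Finset.sum_neg_distrib]
    ring
  rw [geomsum_block, h2t, mul_zero]


theorem stmt_11 (p k t s m : ℕ) (hp : p.Prime)
    (hk : 0 < k) (ht : 0 < t) (hs : 0 < s)
    (hdvd : k ∣ p ^ t + 1) (hm : m = 2 * t * s)
    (F : Type) [Field F] [Fintype F] [Algebra (ZMod p) F]
    (hF : Fintype.card F = p ^ m)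
    (ω : Fˣ) (hω : ∀ u : Fˣ, u ∈ Subgroup.zpowers ω) :
    k ∣ (p ^ m - 1) / (p - 1) ∧
      ∀ i < k, ∃ z : ℤ, gaussianPeriod p F ω k i = (z : ℂ) := by
  haveI : Fact p.Prime := ⟨hp⟩
  have hp2 : 2 ≤ p := hp.two_le
  set Q : ℕ := ∑ i ∈ range m, p ^ i with hQdef
  have hQk : k ∣ Q := by rw [hQdef, hm]; exact key_dvd p k t s hdvd
  -- (p-1) * Q = p^m - 1
  have hZ : ((p : ℤ) - 1) * (Q : ℤ) = (p : ℤ) ^ m - 1 := by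
    rw [hQdef]
    push_cast
    rw [mul_comm]
    exact geom_sum_mul _ _
  have hNat : (p - 1) * Q = p ^ m - 1 := by
    have h1 : 1 ≤ p ^ m := Nat.one_le_pow _ _ (by omega)
    zify [Nat.one_le_of_lt hp2, h1]
    omega
  have hdiv : (p ^ m - 1) / (p - 1) = Q :=
    Nat.div_eq_of_eq_mul_left (by omega) (hNat.symm.trans (mul_comm _ _))
  refine ⟨hdiv ▸ hQk, ?_⟩
  -- Part 2
  have hq1 : Fintype.card Fˣ = p ^ m - 1 := by rw [Fintype.card_units, hF]
  have hord : orderOf ω = p ^ m - 1 := by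
    rw [orderOf_eq_card_of_forall_mem_zpowers hω, Nat.card_eq_fintype_card, hq1]
  -- every unit killed by p-1 is a k-th power
  have hkpow : ∀ u : Fˣ, u ^ (p - 1) = 1 → ∃ w : Fˣ, u = w ^ k := by
    intro u hu
    obtain ⟨n, hn'⟩ := hω u
    have hn : ω ^ n = u := hn'
    rw [← hn, ← zpow_natCast, ← zpow_mul] at hu
    have hdvd1 : ((p ^ m - 1 : ℕ) : ℤ) ∣ n * ((p : ℤ) - 1) := by
      have := (orderOf_dvd_iff_zpow_eq_one).mpr hu
      rw [hord] at this
      convert this using 2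
      have : ((p - 1 : ℕ) : ℤ) = (p : ℤ) - 1 := by
        push_cast [Nat.one_le_of_lt hp2]; ring
      omega
    have hQn : (Q : ℤ) ∣ n := by
      have hcast : ((p ^ m - 1 : ℕ) : ℤ) = ((p : ℤ) - 1) * (Q : ℤ) := by
        rw [hZ]
        have h1 : 1 ≤ p ^ m := Nat.one_le_pow _ _ (by omega)
        push_cast [h1]; ring
      rw [hcast] at hdvd1
      have hne : (p : ℤ) - 1 ≠ 0 := by
        have : (2 : ℤ) ≤ (p : ℤ) := by exact_mod_cast hp2
        omega
      rw [mul_comm n ((p : ℤ) - 1)] at hdvd1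
      exact (mul_dvd_mul_iff_left hne).mp hdvd1
    obtain ⟨e, he⟩ : (k : ℤ) ∣ n := dvd_trans (Int.natCast_dvd_natCast.mpr hQk) hQn
    refine ⟨ω ^ e, ?_⟩
    rw [← hn, he, mul_comm, zpow_mul, zpow_natCast]
  intro i _
  -- notation
  set τ : Fˣ → ZMod p := fun x => Algebra.trace (ZMod p) F (x : F) with hτ
  set S : Finset Fˣ := Finset.univ.filter (fun x : Fˣ => ∃ y : Fˣ, x = ω ^ i * y ^ k) with hS
  set c : ZMod p → ℕ := fun a => (S.filter (fun x => τ x = a)).card with hc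
  -- multiplication by a unit of ZMod p preserves S and scales the trace
  have hmain : ∀ a : ZMod p, a ≠ 0 → c a = c 1 := by
    intro a ha
    have hamap : (algebraMap (ZMod p) F) a ≠ 0 := fun h => ha <|
      (map_eq_zero_iff _ (algebraMap (ZMod p) F).injective).mp h
    set α : Fˣ := Units.mk0 _ hamap with hα
    have hαval : (α : F) = algebraMap (ZMod p) F a := rfl
    have hαpow : α ^ (p - 1) = 1 := by
      ext
      push_cast [hαval]
      rw [← map_pow, ZMod.pow_card_sub_one_eq_one ha, map_one]
    obtain ⟨w, hw⟩ := hkpow α hαpow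
    have htr : ∀ x : Fˣ, τ (α * x) = a * τ x := by
      intro x
      rw [hτ]
      simp only [Units.val_mul, hαval, ← Algebra.smul_def]
      rw [map_smul, smul_eq_mul]
    have htr' : ∀ x : Fˣ, τ (α⁻¹ * x) = a⁻¹ * τ x := by
      intro x
      have := htr (α⁻¹ * x)
      rw [← mul_assoc, mul_inv_cancel, one_mul] at this
      rw [this, ← mul_assoc, inv_mul_cancel₀ ha, one_mul]
    have hSmem : ∀ x : Fˣ, x ∈ S → α * x ∈ S := by
      intro x hx
      rw [hS, Finset.mem_filter] at hx ⊢
      obtain ⟨-, y, hy⟩ := hx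
      exact ⟨Finset.mem_univ _, w * y, by rw [hy, hw, mul_pow, mul_left_comm]⟩
    have hSmem' : ∀ x : Fˣ, x ∈ S → α⁻¹ * x ∈ S := by
      intro x hx
      rw [hS, Finset.mem_filter] at hx ⊢
      obtain ⟨-, y, hy⟩ := hx
      refine ⟨Finset.mem_univ _, w⁻¹ * y, ?_⟩
      rw [hy, hw, mul_pow, inv_pow, mul_left_comm]
    rw [hc]
    apply Finset.card_nbij' (fun x => α⁻¹ * x) (fun x => α * x)
    · intro x hx
      rw [Finset.mem_coe, Finset.mem_filter] at hx ⊢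
      refine ⟨hSmem' x hx.1, ?_⟩
      rw [htr', hx.2, inv_mul_cancel₀ ha]
    · intro x hx
      rw [Finset.mem_coe, Finset.mem_filter] at hx ⊢
      refine ⟨hSmem x hx.1, ?_⟩
      rw [htr, hx.2, mul_one]
    · intro x _; simp [← mul_assoc]
    · intro x _; simp [← mul_assoc]
  -- the character values
  set ζ : ℂ := Complex.exp (2 * Real.pi * Complex.I / p) with hζdef
  have hζ : IsPrimitiveRoot ζ p := Complex.isPrimitiveRoot_exp p hp.ne_zero
  have hsum0 : ∑ a : ZMod p, ζ ^ (a : ZMod p).val = 0 := by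
    rw [Finset.sum_nbij' (i := fun a : ZMod p => (a.val : ℕ))
      (j := fun n : ℕ => (n : ZMod p)) (t := Finset.range p)
      (g := fun n => ζ ^ n)]
    · exact hζ.geom_sum_eq_zero hp.one_lt
    · intro a _; exact Finset.mem_range.mpr (ZMod.val_lt a)
    · intro n _; exact Finset.mem_univ _
    · intro a _; exact ZMod.natCast_zmod_val a
    · intro n hn; exact ZMod.val_cast_of_lt (Finset.mem_range.mp hn)
    · intro a _; rfl
  -- compute the period
  have hperiod : gaussianPeriod p F ω k i = ∑ a : ZMod p, (c a : ℂ) * ζ ^ a.val := by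
    rw [gaussianPeriod]
    have hterm : ∀ x : Fˣ,
        Complex.exp (2 * Real.pi * Complex.I * ((τ x).val : ℂ) / (p : ℂ))
          = ζ ^ (τ x).val := by
      intro x
      rw [hζdef, ← Complex.exp_nat_mul]
      ring_nf
    rw [show (Finset.univ.filter (fun x : Fˣ => ∃ y : Fˣ, x = ω ^ i * y ^ k)) = S from rfl]
    rw [Finset.sum_congr rfl (fun x _ => hterm x)]
    rw [← Finset.sum_fiberwise S τ (fun x => ζ ^ (τ x).val)]
    refine Finset.sum_congr rfl fun a _ => ?_
    have hfib : ∑ x ∈ S.filter (fun x => τ x = a), ζ ^ (τ x).val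
        = ∑ x ∈ S.filter (fun x => τ x = a), ζ ^ a.val :=
      Finset.sum_congr rfl fun x hx => by rw [(Finset.mem_filter.mp hx).2]
    rw [hfib, Finset.sum_const, nsmul_eq_mul]
  refine ⟨(c 0 : ℤ) - (c 1 : ℤ), ?_⟩
  rw [hperiod]
  have hsplit : ∑ a : ZMod p, (c a : ℂ) * ζ ^ a.val
      = (c 0 : ℂ) * ζ ^ (0 : ZMod p).val + ∑ a ∈ Finset.univ.erase (0 : ZMod p), (c a : ℂ) * ζ ^ a.val := by
    rw [← Finset.add_sum_erase _ _ (Finset.mem_univ (0 : ZMod p))]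
  rw [hsplit]
  have h0val : ((0 : ZMod p)).val = 0 := ZMod.val_zero
  have hrest : ∑ a ∈ Finset.univ.erase (0 : ZMod p), (c a : ℂ) * ζ ^ a.val
      = (c 1 : ℂ) * ∑ a ∈ Finset.univ.erase (0 : ZMod p), ζ ^ a.val := by
    rw [Finset.mul_sum]
    exact Finset.sum_congr rfl fun a ha => by
      rw [hmain a (Finset.ne_of_mem_erase ha)]
  have herase : ∑ a ∈ Finset.univ.erase (0 : ZMod p), ζ ^ a.val = -1 := by
    have h := Finset.add_sum_erase _ (fun a : ZMod p => ζ ^ a.val) (Finset.mem_univ (0 : ZMod p))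
    rw [hsum0] at h
    simp only [ZMod.val_zero, pow_zero] at h
    linear_combination h
  rw [hrest, herase, h0val, pow_zero]
  push_cast
  ring
end

section
/- Let p be an odd prime and m ≥ 1, and set k = (p^m + 1)/2 and q = p^{2m}. Then the simple graph Γ(k, q) is isomorphic to the rook's graph K_{p^m} □ K_{p^m}, the box (Cartesian) product of two complete graphs on p^m vertices (equivalently, the Hamming graph H(2, p^m)). -/
open Polynomial Finset
open scoped Classical

/-- In a finite cyclic group of order `k * d`, an element is a `k`-th power iff
its `d`-th power is trivial. -/
lemma pow_crit {G : Type} [Group G] [Fintype G] {g : G}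
    (hg : ∀ x : G, x ∈ Subgroup.zpowers g) {k d : ℕ} (hd : 0 < d)
    (hcard : Fintype.card G = k * d) (x : G) :
    (∃ y : G, x = y ^ k) ↔ x ^ d = 1 := by
  have horder : orderOf g = Fintype.card G := by
    rw [orderOf_eq_card_of_forall_mem_zpowers hg, Nat.card_eq_fintype_card]
  constructor
  · rintro ⟨y, rfl⟩
    rw [← pow_mul, ← hcard, pow_card_eq_one]
  · intro h
    obtain ⟨j, hj⟩ := (Submonoid.mem_powers_iff x g).mp
      (mem_powers_iff_mem_zpowers.mpr (hg x))
    have h1 : g ^ (j * d) = 1 := by rw [pow_mul, hj, h]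
    have h2 : k * d ∣ j * d := by
      rw [← hcard, ← horder]; exact orderOf_dvd_of_pow_eq_one h1
    obtain ⟨i, rfl⟩ := (Nat.mul_dvd_mul_iff_right hd).mp h2
    exact ⟨g ^ i, by rw [← hj, ← pow_mul, mul_comm k i]⟩

/-- In a finite cyclic group of order `k * d`, there are exactly `d` solutions of
`x ^ d = 1`. -/
lemma card_pow_eq_one {G : Type} [Group G] [Fintype G] {g : G}
    (hg : ∀ x : G, x ∈ Subgroup.zpowers g) {k d : ℕ} (hk : 0 < k) (hd : 0 < d)
    (hcard : Fintype.card G = k * d) :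
    Nat.card {x : G // x ^ d = 1} = d := by
  have horder : orderOf g = Fintype.card G := by
    rw [orderOf_eq_card_of_forall_mem_zpowers hg, Nat.card_eq_fintype_card]
  have hgk : (g ^ k) ^ d = 1 := by rw [← pow_mul, ← hcard, pow_card_eq_one]
  have hmem : ∀ x : G, x ^ d = 1 ↔ x ∈ Subgroup.zpowers (g ^ k) := by
    intro x
    constructor
    · intro h
      obtain ⟨j, hj⟩ := (Submonoid.mem_powers_iff x g).mp
        (mem_powers_iff_mem_zpowers.mpr (hg x))
      have h1 : g ^ (j * d) = 1 := by rw [pow_mul, hj, h]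
      have h2 : k * d ∣ j * d := by
        rw [← hcard, ← horder]; exact orderOf_dvd_of_pow_eq_one h1
      obtain ⟨i, rfl⟩ := (Nat.mul_dvd_mul_iff_right hd).mp h2
      refine mem_powers_iff_mem_zpowers.mp ?_
      exact ⟨i, by show (g ^ k) ^ i = x; rw [← pow_mul]; exact hj⟩
    · intro hx
      obtain ⟨i, rfl⟩ := hx
      rw [← zpow_natCast ((g ^ k) ^ i), ← zpow_mul, mul_comm, zpow_mul,
        zpow_natCast, hgk, one_zpow]
  have h3 : Nat.card {x : G // x ^ d = 1}
      = Nat.card (Subgroup.zpowers (g ^ k)) :=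
    Nat.card_congr (Equiv.subtypeEquivRight hmem)
  rw [h3, Nat.card_zpowers, orderOf_pow, horder, hcard,
    Nat.gcd_eq_right ⟨d, rfl⟩, Nat.mul_div_cancel_left _ hk]

theorem stmt_14 (p m : ℕ) (hp : p.Prime) (hpodd : Odd p) (hm : 0 < m)
    (F : Type) [Field F] [Fintype F] (hF : Fintype.card F = p ^ (2 * m)) :
    Nonempty
      (gpGraph F ((p ^ m + 1) / 2) ≃g
        SimpleGraph.boxProd (⊤ : SimpleGraph (Fin (p ^ m)))
          (⊤ : SimpleGraph (Fin (p ^ m)))) := by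
  haveI : Fact p.Prime := ⟨hp⟩
  -- basic arithmetic
  set n := p ^ m with hn_def
  have hp2 : p ≠ 2 := by rintro rfl; simp [Nat.odd_iff] at hpodd
  have hp3 : 3 ≤ p := by have := hp.two_le; omega
  have hn3 : 3 ≤ n := le_trans hp3 (Nat.le_self_pow hm.ne' p)
  have hnodd : Odd n := hpodd.pow
  set k := (n + 1) / 2 with hk_def
  have h2k : 2 * k = n + 1 := Nat.mul_div_cancel' hnodd.add_one.two_dvd
  have hq : Fintype.card F = n * n := by
    rw [hF, hn_def, two_mul, pow_add]
  have hnn : n * n - 1 = (n + 1) * (n - 1) := by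
    obtain ⟨t, ht⟩ : ∃ t, n = t + 1 := ⟨n - 1, by omega⟩
    rw [ht]
    have h1 : (t + 1) * (t + 1) = t * t + 2 * t + 1 := by ring
    have h2 : (t + 1 + 1) * (t + 1 - 1) = t * t + 2 * t := by
      simp only [Nat.add_sub_cancel]; ring
    omega
  have hcardU : Fintype.card Fˣ = k * (2 * (n - 1)) := by
    rw [Fintype.card_units, hq]
    have : k * (2 * (n - 1)) = (2 * k) * (n - 1) := by ring
    rw [this, h2k, hnn]
  -- characteristic
  haveI hchar : CharP F p := by
    obtain ⟨r, hr⟩ := CharP.exists F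
    haveI := hr
    obtain ⟨n', hr', hcard⟩ := FiniteField.card F r
    have h1 : r ∣ p ^ (2 * m) := by
      rw [← hF, hcard]; exact dvd_pow_self r (by exact_mod_cast n'.2.ne')
    have h2 : r = p := by
      have := hr'.dvd_of_dvd_pow h1
      exact (Nat.prime_dvd_prime_iff_eq hr' hp).mp this
    rwa [h2] at hr
  have h2F : (2 : F) ≠ 0 := by
    have : ((2 : ℕ) : F) ≠ 0 := by
      rw [Ne, CharP.cast_eq_zero_iff F p 2]
      intro hdvd; have := Nat.le_of_dvd (by norm_num) hdvd; omega
    simpa using this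
  -- the subfield of fixed points of x ↦ x ^ n
  let K : Subfield F :=
    { carrier := {x : F | x ^ n = x}
      mul_mem' := by
        intro a b ha hb
        simp only [Set.mem_setOf_eq] at *
        rw [mul_pow, ha, hb]
      one_mem' := by simp
      add_mem' := by
        intro a b ha hb
        simp only [Set.mem_setOf_eq] at ha hb ⊢
        rw [hn_def, add_pow_char_pow, ← hn_def, ha, hb]
      zero_mem' := by
        simp only [Set.mem_setOf_eq]
        exact zero_pow (by omega)
      neg_mem' := by
        intro a ha
        simp only [Set.mem_setOf_eq] at ha ⊢
        rw [hnodd.neg_pow, ha]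
      inv_mem' := by
        intro a ha
        simp only [Set.mem_setOf_eq] at ha ⊢
        rw [inv_pow, ha] }
  have hKmem : ∀ x : F, x ∈ K ↔ x ^ n = x := fun _ => Iff.rfl
  -- generator of the unit group
  obtain ⟨g, hg⟩ := IsCyclic.exists_generator (α := Fˣ)
  -- cardinality of K
  have hcardB : Nat.card {x : Fˣ // x ^ (n - 1) = 1} = n - 1 := by
    refine card_pow_eq_one hg (k := n + 1) (d := n - 1) (by omega) (by omega) ?_
    rw [Fintype.card_units, hq, hnn]
  have hcardK : Fintype.card K = n := by
    have h1 : Fintype.card K = Fintype.card {x : F // x ^ n = x} :=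
      Fintype.card_congr (Equiv.subtypeEquivRight fun x => Iff.rfl)
    have hA : (univ.filter fun x : F => x ^ n = x)
        = insert (0 : F) ((univ.filter fun x : Fˣ => x ^ (n - 1) = 1).image Units.val) := by
      ext x
      simp only [mem_filter, mem_univ, true_and, mem_insert, Finset.mem_image]
      constructor
      · intro hx
        rcases eq_or_ne x 0 with h | h
        · exact Or.inl h
        · refine Or.inr ⟨Units.mk0 x h, ?_, rfl⟩
          have hxn : x ^ (n - 1) * x = x := by
            rw [← pow_succ, Nat.sub_add_cancel (by omega)]; exact hx
          have hx1 : x ^ (n - 1) = 1 := by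
            apply mul_right_cancel₀ h; rw [hxn, one_mul]
          exact Units.ext (by simpa using hx1)
      · rintro (rfl | ⟨u, hu, rfl⟩)
        · exact zero_pow (by omega)
        · have h1 : (u : F) ^ (n - 1) = 1 := by
            have := congrArg Units.val hu; simpa using this
          calc (u : F) ^ n = (u : F) ^ (n - 1) * u := by
                rw [← pow_succ, Nat.sub_add_cancel (by omega)]
            _ = u := by rw [h1, one_mul]
    have h0 : (0 : F) ∉ (univ.filter fun x : Fˣ => x ^ (n - 1) = 1).image Units.val := by
      simp
    rw [h1, Fintype.card_subtype, hA, Finset.card_insert_of_notMem h0,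
      Finset.card_image_of_injective _ (fun _ _ h => Units.ext h), ← Fintype.card_subtype]
    have h2 : Fintype.card {x : Fˣ // x ^ (n - 1) = 1} = n - 1 := by
      rw [← Nat.card_eq_fintype_card]; exact hcardB
    omega
  -- characteristic of K
  haveI : CharP K p := by
    constructor
    intro a
    rw [← CharP.cast_eq_zero_iff F p a, ← map_natCast K.subtype a,
      map_eq_zero_iff _ Subtype.coe_injective]
  have hringK : ringChar K ≠ 2 := by
    rw [ringChar.eq K p]; exact_mod_cast hp2
  have h2K : (2 : K) ≠ 0 := by
    have : ((2 : ℕ) : K) ≠ 0 := by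
      rw [Ne, CharP.cast_eq_zero_iff K p 2]
      intro hdvd; have := Nat.le_of_dvd (by norm_num) hdvd; omega
    simpa using this
  -- a nonsquare of K which is a square in F
  obtain ⟨a, ha⟩ := FiniteField.exists_nonsquare (F := K) hringK
  have ha0 : a ≠ 0 := fun h => ha (by rw [h]; exact ⟨0, by simp⟩)
  have haF0 : (a : F) ≠ 0 := fun h => ha0 (Subtype.coe_injective (by simpa using h))
  have haK : (a : F) ^ (n - 1) = 1 := by
    have h1 : (a : F) ^ n = (a : F) := a.2
    have hxn : (a : F) ^ (n - 1) * a = a := by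
      rw [← pow_succ, Nat.sub_add_cancel (by omega)]; exact h1
    apply mul_right_cancel₀ haF0; rw [hxn, one_mul]
  have hringF : ringChar F ≠ 2 := by
    rw [ringChar.eq F p]; exact_mod_cast hp2
  have hsqF : IsSquare (a : F) := by
    rw [FiniteField.isSquare_iff hringF haF0]
    have hdiv : Fintype.card F / 2 = (n - 1) * k := by
      have h1 : 2 * ((n - 1) * k) = (n + 1) * (n - 1) := by
        rw [← h2k]; ring
      have h2 : Fintype.card F = n * n := hq
      have h5 : n ≤ n * n := Nat.le_mul_of_pos_left n (by omega)
      have h3 : n * n = 2 * ((n - 1) * k) + 1 := by omega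
      omega
    rw [hdiv, pow_mul, haK, one_pow]
  obtain ⟨c, hc⟩ := hsqF
  have hc2 : c ^ 2 = (a : F) := by rw [sq]; exact hc.symm
  have hcK : c ∉ K := by
    intro hmem
    exact ha ⟨⟨c, hmem⟩, Subtype.ext (by simpa using hc)⟩
  -- the coordinate map
  set f : K × K → F := fun st => (st.1 : F) + (st.2 : F) * c with hf_def
  have hinj : Function.Injective f := by
    rintro ⟨s, t⟩ ⟨s', t'⟩ h
    simp only [hf_def] at h
    have hts : (t : F) = t' := by
      by_contra hne
      apply hcK
      have h1 : ((t : F) - t') * c = (s' : F) - s := by linear_combination h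
      have hne' : (t : F) - t' ≠ 0 := sub_ne_zero.mpr hne
      have h2 : c = ((s' - s) * (t - t')⁻¹ : K) := by
        push_cast [Subfield.coe_inv]
        field_simp
        linear_combination h
      rw [h2]; exact SetLike.coe_mem _
    have hss : (s : F) = s' := by
      rw [hts] at h
      exact add_right_cancel h
    exact Prod.ext (Subtype.coe_injective hss) (Subtype.coe_injective hts)
  have hcards : Fintype.card (K × K) = Fintype.card F := by
    rw [Fintype.card_prod, hcardK, hq]
  let e : K × K ≃ F :=
    Equiv.ofBijective f ((Fintype.bijective_iff_injective_and_card f).mpr ⟨hinj, hcards⟩)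
  have he : ∀ x : K × K, e x = f x := fun _ => rfl
  -- the power criterion
  have hpow : ∀ w : F, w ≠ 0 → ((∃ x : Fˣ, w = (x : F) ^ k) ↔ w ^ 2 ∈ K) := by
    intro w hw
    have crit := pow_crit hg (k := k) (d := 2 * (n - 1)) (by omega) hcardU (Units.mk0 w hw)
    have hud : ∀ N : ℕ, ((Units.mk0 w hw) ^ N = 1 ↔ w ^ N = 1) := by
      intro N
      rw [Units.ext_iff]
      simp
    have hstep : w ^ (2 * (n - 1)) = 1 ↔ (w ^ 2) ^ n = w ^ 2 := by
      constructor
      · intro h1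
        have h2 : (w ^ 2) ^ (n - 1) = 1 := by rw [← pow_mul]; exact h1
        calc (w ^ 2) ^ n = (w ^ 2) ^ (n - 1) * w ^ 2 := by
              rw [← pow_succ, Nat.sub_add_cancel (by omega)]
          _ = w ^ 2 := by rw [h2, one_mul]
      · intro h1
        have hw2 : w ^ 2 ≠ 0 := pow_ne_zero _ hw
        have h2 : (w ^ 2) ^ (n - 1) = 1 := by
          apply mul_right_cancel₀ hw2
          rw [one_mul, ← pow_succ, Nat.sub_add_cancel (by omega)]; exact h1
        rw [pow_mul]; exact h2
    rw [hKmem, ← hstep, ← hud, ← crit]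
    constructor
    · rintro ⟨x, hx⟩
      exact ⟨x, Units.ext (by push_cast; exact hx)⟩
    · rintro ⟨x, hx⟩
      refine ⟨x, ?_⟩
      have := congrArg Units.val hx
      push_cast at this
      exact this
  -- coordinates of squares
  have hsq_expand : ∀ s t : K, ((s : F) + t * c) ^ 2
      = ((s ^ 2 + t ^ 2 * a : K) : F) + ((2 * s * t : K) : F) * c := by
    intro s t
    have hcoe2 : ((2 : K) : F) = 2 := by norm_cast
    have h1 : ((s : F) + t * c) ^ 2
        = ((s : F) ^ 2 + (t : F) ^ 2 * c ^ 2) + (2 * s * t) * c := by ring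
    rw [h1, hc2]; push_cast [hcoe2]; ring
  have hKcoord : ∀ s t : K, (((s : F) + t * c) ^ 2 ∈ K ↔ (s = 0 ∨ t = 0)) := by
    intro s t
    rw [hsq_expand]
    constructor
    · intro h
      by_contra hcon
      push_neg at hcon
      obtain ⟨hs, ht⟩ := hcon
      have h2st : (2 * s * t : K) ≠ 0 := mul_ne_zero (mul_ne_zero h2K hs) ht
      apply hcK
      have h1 : ((2 * s * t : K) : F) * c ∈ K := by
        have h2 := K.sub_mem h (SetLike.coe_mem (s ^ 2 + t ^ 2 * a))
        have h3 : ((s ^ 2 + t ^ 2 * a : K) : F) + ((2 * s * t : K) : F) * c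
            - ((s ^ 2 + t ^ 2 * a : K) : F) = ((2 * s * t : K) : F) * c := by ring
        rwa [h3] at h2
      have h4 : c = (((2 * s * t)⁻¹ : K) : F) * (((2 * s * t : K) : F) * c) := by
        rw [Subfield.coe_inv, ← mul_assoc, inv_mul_cancel₀ ?_, one_mul]
        exact fun hz => h2st (Subtype.coe_injective (by simpa using hz))
      rw [h4]
      exact K.mul_mem (SetLike.coe_mem _) h1
    · rintro (rfl | rfl)
      · have hz : ((2 * (0 : K) * t : K) : F) = 0 := by push_cast; ring
        have : (((0 : K) ^ 2 + t ^ 2 * a : K) : F) + ((2 * (0 : K) * t : K) : F) * c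
            = (((0 : K) ^ 2 + t ^ 2 * a : K) : F) := by rw [hz]; ring
        rw [this]
        exact SetLike.coe_mem _
      · have hz : ((2 * s * (0 : K) : K) : F) = 0 := by push_cast; ring
        have : ((s ^ 2 + (0 : K) ^ 2 * a : K) : F) + ((2 * s * (0 : K) : K) : F) * c
            = ((s ^ 2 + (0 : K) ^ 2 * a : K) : F) := by rw [hz]; ring
        rw [this]
        exact SetLike.coe_mem _
  -- the key adjacency criterion
  have key : ∀ s t : K, ¬(s = 0 ∧ t = 0) →
      ((∃ x : Fˣ, (s : F) + t * c = (x : F) ^ k) ↔ (s = 0 ∨ t = 0)) := by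
    intro s t hst
    have hw : (s : F) + t * c ≠ 0 := by
      intro h0
      apply hst
      have : f (s, t) = f (0, 0) := by simpa [hf_def] using h0
      have := hinj this
      exact ⟨congrArg Prod.fst this, congrArg Prod.snd this⟩
    rw [hpow _ hw, hKcoord]
  -- difference of coordinate maps
  have hdiff : ∀ s₁ t₁ s₂ t₂ : K,
      f (s₂, t₂) - f (s₁, t₁) = ((s₂ - s₁ : K) : F) + ((t₂ - t₁ : K) : F) * c := by
    intro s₁ t₁ s₂ t₂
    simp only [hf_def]; push_cast; ring
  -- assemble the isomorphism
  let κ : K ≃ Fin n := Fintype.equivFinOfCardEq hcardK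
  let φ : F ≃ Fin n × Fin n := e.symm.trans (Equiv.prodCongr κ κ)
  refine ⟨⟨φ, ?_⟩⟩
  intro u v
  obtain ⟨⟨s₁, t₁⟩, rfl⟩ := e.surjective u
  obtain ⟨⟨s₂, t₂⟩, rfl⟩ := e.surjective v
  have hφ : ∀ st : K × K, φ (e st) = (κ st.1, κ st.2) := by
    rintro ⟨x, y⟩
    simp [φ]
  rw [hφ, hφ]
  simp only [SimpleGraph.boxProd_adj, SimpleGraph.top_adj, ne_eq,
    EmbeddingLike.apply_eq_iff_eq]
  rw [gpGraph, SimpleGraph.fromRel_adj]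
  rw [he, he, hdiff s₁ t₁ s₂ t₂]
  have hswap : f (s₁, t₁) - f (s₂, t₂) = ((s₁ - s₂ : K) : F) + ((t₁ - t₂ : K) : F) * c :=
    hdiff s₂ t₂ s₁ t₁
  rw [hswap]
  have hne_iff : f (s₁, t₁) ≠ f (s₂, t₂) ↔ ¬(s₁ = s₂ ∧ t₁ = t₂) := by
    rw [Ne, hinj.eq_iff, Prod.mk.injEq]
  rw [hne_iff]
  constructor
  · rintro (⟨hne, heq⟩ | ⟨hne, heq⟩)
    · refine ⟨fun h => hne h.1, Or.inl ?_⟩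
      rw [key (s₂ - s₁) (t₂ - t₁) (by
        intro ⟨h1, h2⟩
        exact hne (sub_eq_zero.mp h1).symm)]
      right; rw [sub_eq_zero]; exact heq.symm
    · refine ⟨fun h => hne h.2, Or.inl ?_⟩
      rw [key (s₂ - s₁) (t₂ - t₁) (by
        intro ⟨h1, h2⟩
        exact hne (sub_eq_zero.mp h2).symm)]
      left; rw [sub_eq_zero]; exact heq.symm
  · rintro ⟨hne, hrel⟩
    have hne' : ¬(s₂ - s₁ = 0 ∧ t₂ - t₁ = 0) := by
      intro ⟨h1, h2⟩
      exact hne ⟨(sub_eq_zero.mp h1).symm, (sub_eq_zero.mp h2).symm⟩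
    have hne'' : ¬(s₁ - s₂ = 0 ∧ t₁ - t₂ = 0) := by
      intro ⟨h1, h2⟩
      exact hne ⟨sub_eq_zero.mp h1, sub_eq_zero.mp h2⟩
    have hcases : (s₂ - s₁ = 0) ∨ (t₂ - t₁ = 0) := by
      rcases hrel with h | h
      · exact (key _ _ hne').mp h
      · have := (key _ _ hne'').mp h
        rcases this with h1 | h1
        · left; rw [sub_eq_zero] at h1 ⊢; exact h1.symm
        · right; rw [sub_eq_zero] at h1 ⊢; exact h1.symm
    rcases hcases with h1 | h1
    · rw [sub_eq_zero] at h1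
      right
      exact ⟨fun ht => hne ⟨h1.symm, ht⟩, h1.symm⟩
    · rw [sub_eq_zero] at h1
      left
      exact ⟨fun hs => hne ⟨hs, h1.symm⟩, h1.symm⟩
end

section
/- Let q = p^m with p prime, p ≡ 1 (mod 4) and m even, and set n = (q − 1)/4. Then the simple graph Γ(4, q) is Ramanujan: it is connected and n-regular, and every eigenvalue λ of its adjacency matrix with λ ≠ n satisfies |λ| ≤ 2√(n − 1). -/
open Polynomial Finset
open scoped Classical

section Aux

variable {F : Type} [Field F] [Fintype F]

/-- The set of nonzero fourth powers, as a `Finset`. -/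
noncomputable def S4 (F : Type) [Field F] [Fintype F] : Finset F :=
  Finset.univ.filter (fun a : F => ∃ x : Fˣ, a = (x : F) ^ 4)

lemma mem_S4 {a : F} : a ∈ S4 F ↔ ∃ x : Fˣ, a = (x : F) ^ 4 := by
  simp [S4]

lemma S4_ne_zero {a : F} (ha : a ∈ S4 F) : a ≠ 0 := by
  obtain ⟨x, rfl⟩ := mem_S4.mp ha
  exact pow_ne_zero _ x.ne_zero

lemma exists_c (h8 : 8 ∣ Fintype.card F - 1) : ∃ c : Fˣ, ((c : F)) ^ 4 = -1 := by
  obtain ⟨g, hg⟩ := IsCyclic.exists_generator (α := Fˣ)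
  obtain ⟨k, hk⟩ := h8
  have hcard : Fintype.card Fˣ = Fintype.card F - 1 := Fintype.card_units (α := F)
  have horder : orderOf g = 8 * k := by
    rw [orderOf_eq_card_of_forall_mem_zpowers hg, Nat.card_eq_fintype_card, hcard, hk]
  have hk0 : 0 < k := by
    rcases Nat.eq_zero_or_pos k with h | h
    · have h2 : 2 ≤ Fintype.card F := Fintype.one_lt_card
      omega
    · exact h
  set u : Fˣ := g ^ (4 * k) with hu
  have hu2 : u ^ 2 = 1 := by
    rw [hu, ← pow_mul]
    have : 4 * k * 2 = 8 * k := by ring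
    rw [this, ← horder, pow_orderOf_eq_one]
  have hu1 : u ≠ 1 := by
    intro h
    have := orderOf_dvd_of_pow_eq_one (n := 4 * k) (by rw [← hu, h])
    rw [horder] at this
    have := Nat.le_of_dvd (by omega) this
    omega
  have huF : (u : F) = -1 := by
    have h2 : ((u : F) - 1) * ((u : F) + 1) = 0 := by
      have : (u : F) ^ 2 = 1 := by
        rw [← Units.val_pow_eq_pow_val, hu2, Units.val_one]
      ring_nf
      linear_combination this
    rcases mul_eq_zero.mp h2 with h | h
    · exact absurd (Units.ext (by rw [Units.val_one]; exact sub_eq_zero.mp h)) hu1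
    · exact eq_neg_of_add_eq_zero_left h
  refine ⟨g ^ k, ?_⟩
  rw [← Units.val_pow_eq_pow_val, ← pow_mul, mul_comm k 4, ← hu, huF]

lemma S4_neg (hc : ∃ c : Fˣ, ((c : F)) ^ 4 = -1) {a : F} (ha : a ∈ S4 F) : -a ∈ S4 F := by
  obtain ⟨x, rfl⟩ := mem_S4.mp ha
  obtain ⟨c, hcF⟩ := hc
  refine mem_S4.mpr ⟨c * x, ?_⟩
  push_cast
  rw [mul_pow, hcF]
  ring

lemma gp_adj (hc : ∃ c : Fˣ, ((c : F)) ^ 4 = -1) (u v : F) :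
    (gpGraph F 4).Adj u v ↔ v - u ∈ S4 F := by
  rw [gpGraph, SimpleGraph.fromRel_adj]
  constructor
  · rintro ⟨hne, h | h⟩
    · exact mem_S4.mpr h
    · have h1 : u - v ∈ S4 F := mem_S4.mpr h
      have h2 := S4_neg hc h1
      rwa [neg_sub] at h2
  · intro h
    obtain ⟨x, hx⟩ := mem_S4.mp h
    refine ⟨fun he => ?_, Or.inl ⟨x, hx⟩⟩
    rw [he, sub_self] at hx
    exact pow_ne_zero 4 x.ne_zero hx.symm

end Aux
section Chi

variable {F : Type} [Field F] [Fintype F]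

lemma exists_chi (h4 : 4 ∣ Fintype.card F - 1) :
    ∃ χ : MulChar F ℂ, orderOf χ = 4 ∧ ∀ a : F, a ≠ 0 → (χ a = 1 ↔ a ∈ S4 F) := by
  obtain ⟨χ, hχ⟩ := MulChar.exists_mulChar_orderOf F h4
    (Complex.isPrimitiveRoot_exp 4 (by norm_num))
  have hχ4 : χ ^ 4 = 1 := by rw [← hχ]; exact pow_orderOf_eq_one χ
  refine ⟨χ, hχ, fun a ha => ?_⟩
  constructor
  · intro h1
    obtain ⟨g, hg⟩ := IsCyclic.exists_generator (α := Fˣ)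
    set φ := MulChar.mulEquivToUnitHom (R := F) (R' := ℂ) χ with hφ
    have hφcoe : ∀ b : Fˣ, ((φ b : ℂˣ) : ℂ) = χ (b : F) := fun b =>
      MulChar.coe_equivToUnitHom χ b
    have hordφ : orderOf φ = 4 := by
      rw [hφ, MulEquiv.orderOf_eq, hχ]
    have hdvd1 : orderOf (φ g) ∣ 4 := by
      rw [← hordφ]
      exact orderOf_map_dvd
        { toFun := fun f : Fˣ →* ℂˣ => f g, map_one' := rfl, map_mul' := fun _ _ => rfl } φ
    have hdvd2 : (4 : ℕ) ∣ orderOf (φ g) := by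
      rw [← hordφ]
      apply orderOf_dvd_of_pow_eq_one
      rw [MonoidHom.eq_iff_eq_on_generator hg (φ ^ orderOf (φ g)) 1]
      rw [MonoidHom.pow_apply, pow_orderOf_eq_one, MonoidHom.one_apply]
    have hord4 : orderOf (φ g) = 4 := Nat.dvd_antisymm (by exact hdvd1) hdvd2
    set au : Fˣ := Units.mk0 a ha with hau
    obtain ⟨t, ht⟩ : ∃ t : ℕ, g ^ t = au := by
      have hmem := hg au
      rwa [← mem_powers_iff_mem_zpowers, Submonoid.mem_powers_iff] at hmem
    have hφau : φ au = 1 := by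
      ext
      rw [hφcoe au, Units.val_one, hau, Units.val_mk0, h1]
    have h4t : (4 : ℕ) ∣ t := by
      rw [← hord4]
      apply orderOf_dvd_of_pow_eq_one
      rw [← map_pow, ht, hφau]
    obtain ⟨s, rfl⟩ := h4t
    refine mem_S4.mpr ⟨g ^ s, ?_⟩
    have : ((g ^ s) ^ 4 : Fˣ) = au := by rw [← pow_mul, mul_comm s 4, ht]
    calc a = ((au : Fˣ) : F) := by rw [hau, Units.val_mk0]
    _ = ((g ^ s : Fˣ) : F) ^ 4 := by rw [← this]; push_cast; ring
  · intro haS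
    obtain ⟨x, rfl⟩ := mem_S4.mp haS
    rw [map_pow, ← MulChar.pow_apply_coe, hχ4, MulChar.one_apply_coe]

omit [Fintype F] in
lemma chi_pow_ne_one {χ : MulChar F ℂ} (hχ : orderOf χ = 4) {j : ℕ} (h0 : 0 < j) (h4 : j < 4) :
    χ ^ j ≠ 1 := by
  intro h
  have := orderOf_dvd_of_pow_eq_one h
  rw [hχ] at this
  exact absurd (Nat.le_of_dvd h0 this) (by omega)

lemma T_eq {χ : MulChar F ℂ} (hχ : orderOf χ = 4)
    (hiff : ∀ a : F, a ≠ 0 → (χ a = 1 ↔ a ∈ S4 F)) (a : F) :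
    ∑ j ∈ range 4, (χ ^ j) a = if a ∈ S4 F then 4 else 0 := by
  have hχ4 : χ ^ 4 = 1 := by rw [← hχ]; exact pow_orderOf_eq_one χ
  rcases eq_or_ne a 0 with rfl | ha
  · rw [if_neg (fun h => S4_ne_zero h rfl)]
    exact Finset.sum_eq_zero fun j _ => MulChar.map_nonunit _ not_isUnit_zero
  · have hu : IsUnit a := ha.isUnit
    have hrw : ∀ j : ℕ, (χ ^ j) a = χ a ^ j := fun j => by
      conv_lhs => rw [← hu.unit_spec]
      rw [MulChar.pow_apply_coe, hu.unit_spec]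
    simp_rw [hrw]
    have hz4 : χ a ^ 4 = 1 := by
      rw [← hrw 4, hχ4]
      conv_lhs => rw [← hu.unit_spec]
      exact MulChar.one_apply_coe _
    by_cases hS : a ∈ S4 F
    · rw [if_pos hS, (hiff a ha).mpr hS]
      simp
    · rw [if_neg hS]
      have hne1 : χ a ≠ 1 := fun h => hS ((hiff a ha).mp h)
      rw [geom_sum_eq hne1 4, hz4, sub_self, zero_div]

lemma sum_one_mulChar : ∑ a : F, (1 : MulChar F ℂ) a = ((Fintype.card F - 1 : ℕ) : ℂ) := by
  have h1 : ∀ a : F, (1 : MulChar F ℂ) a = if a = 0 then 0 else 1 := fun a => by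
    split
    · next h => rw [h]; exact MulChar.map_nonunit _ not_isUnit_zero
    · next h =>
        have hu : IsUnit a := Ne.isUnit h
        conv_lhs => rw [← hu.unit_spec]
        exact MulChar.one_apply_coe _
  simp_rw [h1]
  rw [Finset.sum_ite, Finset.sum_const, Finset.sum_const, Finset.filter_ne', Finset.card_erase_of_mem (mem_univ 0)]
  simp [Finset.card_univ]

lemma card_S4 {χ : MulChar F ℂ} (hχ : orderOf χ = 4)
    (hiff : ∀ a : F, a ≠ 0 → (χ a = 1 ↔ a ∈ S4 F)) :
    4 * (S4 F).card = Fintype.card F - 1 := by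
  have key : ((4 * (S4 F).card : ℕ) : ℂ) = ((Fintype.card F - 1 : ℕ) : ℂ) := by
    have lhs : ∑ a : F, ∑ j ∈ range 4, (χ ^ j) a = ((4 * (S4 F).card : ℕ) : ℂ) := by
      calc ∑ a : F, ∑ j ∈ range 4, (χ ^ j) a
          = ∑ a : F, (if a ∈ S4 F then (4 : ℂ) else 0) :=
            Finset.sum_congr rfl fun a _ => T_eq hχ hiff a
        _ = ∑ a ∈ S4 F, (4 : ℂ) := by
            rw [Finset.sum_ite_mem, Finset.univ_inter]
        _ = ((4 * (S4 F).card : ℕ) : ℂ) := by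
            rw [Finset.sum_const]
            push_cast
            ring
    have rhs : ∑ a : F, ∑ j ∈ range 4, (χ ^ j) a = ((Fintype.card F - 1 : ℕ) : ℂ) := by
      rw [Finset.sum_comm]
      rw [show range 4 = {0, 1, 2, 3} from rfl]
      rw [Finset.sum_insert (by decide), Finset.sum_insert (by decide),
        Finset.sum_insert (by decide), Finset.sum_singleton]
      rw [show ∑ a : F, (χ ^ 0) a = ((Fintype.card F - 1 : ℕ) : ℂ) by
        rw [pow_zero]; exact sum_one_mulChar]
      rw [MulChar.sum_eq_zero_of_ne_one (chi_pow_ne_one hχ one_pos (by norm_num)),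
        MulChar.sum_eq_zero_of_ne_one (chi_pow_ne_one hχ two_pos (by norm_num)),
        MulChar.sum_eq_zero_of_ne_one (chi_pow_ne_one hχ three_pos (by norm_num))]
      ring
    rw [← lhs, rhs]
  exact_mod_cast key

end Chi
section Gauss

variable {F : Type} [Field F] [Fintype F]

lemma ringChar_pos (F : Type) [Field F] [Fintype F] : 0 < ringChar F := by
  have : CharP F (ringChar F) := ringChar.charP F
  exact Nat.pos_of_ne_zero (CharP.char_ne_zero_of_finite F (ringChar F))

lemma abs_gauss {χ : MulChar F ℂ} (hne : χ ≠ 1) {ψ : AddChar F ℂ} (hψ : ψ ≠ 1) :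
    ‖gaussSum χ ψ‖ = Real.sqrt (Fintype.card F) := by
  have hprim := AddChar.IsPrimitive.of_ne_one hψ
  have hconj : (starRingEnd ℂ) (gaussSum χ ψ) = gaussSum χ⁻¹ ψ⁻¹ := by
    rw [gaussSum, gaussSum, map_sum]
    refine Finset.sum_congr rfl fun a _ => ?_
    rw [map_mul, AddChar.starComp_apply (ringChar_pos F)]
    congr 1
    rw [← MulChar.star_apply']
    rfl
  have hmc : gaussSum χ ψ * (starRingEnd ℂ) (gaussSum χ ψ) = (Fintype.card F : ℂ) := by
    rw [hconj]; exact gaussSum_mul_gaussSum_eq_card hne hprim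
  have h2 : ‖gaussSum χ ψ‖ ^ 2 = (Fintype.card F : ℝ) := by
    rw [Complex.mul_conj] at hmc
    rw [Complex.sq_norm]
    exact_mod_cast hmc
  rw [← h2, Real.sqrt_sq (norm_nonneg _)]

lemma gaussSum_one_eq {ψ : AddChar F ℂ} (hψ : ψ ≠ 1) :
    gaussSum (1 : MulChar F ℂ) ψ = -1 := by
  have h1 : ∀ a : F, (1 : MulChar F ℂ) a * ψ a = ψ a - (if a = 0 then 1 else 0) := by
    intro a
    rcases eq_or_ne a 0 with rfl | ha
    · rw [if_pos rfl, MulChar.map_nonunit _ not_isUnit_zero, zero_mul, AddChar.map_zero_eq_one]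
      ring
    · rw [if_neg ha]
      have hu : IsUnit a := Ne.isUnit ha
      conv_lhs => rw [← hu.unit_spec]
      rw [MulChar.one_apply_coe, hu.unit_spec, one_mul, sub_zero]
  rw [gaussSum]
  simp_rw [h1]
  rw [Finset.sum_sub_distrib, AddChar.sum_eq_zero_of_ne_one hψ,
    Finset.sum_ite_eq' Finset.univ (0 : F) (fun _ => (1 : ℂ)), if_pos (mem_univ _)]
  ring

/-- The key bound for the nontrivial eigenvalues. -/
lemma abs_lam_le {χ : MulChar F ℂ} (hχ : orderOf χ = 4)
    (hiff : ∀ a : F, a ≠ 0 → (χ a = 1 ↔ a ∈ S4 F)) {ψ : AddChar F ℂ} (hψ : ψ ≠ 1) :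
    ‖∑ a ∈ S4 F, ψ a‖ ≤ (1 + 3 * Real.sqrt (Fintype.card F)) / 4 := by
  have key : (4 : ℂ) * (∑ a ∈ S4 F, ψ a) =
      gaussSum (1 : MulChar F ℂ) ψ + gaussSum χ ψ + gaussSum (χ ^ 2) ψ + gaussSum (χ ^ 3) ψ := by
    have lhs : ∑ a : F, (∑ j ∈ range 4, (χ ^ j) a) * ψ a = (4 : ℂ) * ∑ a ∈ S4 F, ψ a := by
      calc ∑ a : F, (∑ j ∈ range 4, (χ ^ j) a) * ψ a
          = ∑ a : F, (if a ∈ S4 F then (4 : ℂ) else 0) * ψ a :=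
            Finset.sum_congr rfl fun a _ => by rw [T_eq hχ hiff a]
        _ = ∑ a : F, (if a ∈ S4 F then (4 : ℂ) * ψ a else 0) := by
            refine Finset.sum_congr rfl fun a _ => ?_
            split <;> simp
        _ = ∑ a ∈ S4 F, (4 : ℂ) * ψ a := by rw [Finset.sum_ite_mem, Finset.univ_inter]
        _ = (4 : ℂ) * ∑ a ∈ S4 F, ψ a := by rw [Finset.mul_sum]
    have rhs : ∑ a : F, (∑ j ∈ range 4, (χ ^ j) a) * ψ a =
        gaussSum (1 : MulChar F ℂ) ψ + gaussSum χ ψ + gaussSum (χ ^ 2) ψ + gaussSum (χ ^ 3) ψ := by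
      simp_rw [Finset.sum_mul]
      rw [Finset.sum_comm]
      rw [show range 4 = {0, 1, 2, 3} from rfl]
      rw [Finset.sum_insert (by decide), Finset.sum_insert (by decide),
        Finset.sum_insert (by decide), Finset.sum_singleton]
      rw [pow_zero, pow_one]
      simp only [gaussSum]
      ring
    rw [← lhs, rhs]
  have hne1 : χ ≠ 1 := by
    have h := chi_pow_ne_one hχ one_pos (by norm_num); rwa [pow_one] at h
  have hne2 : χ ^ 2 ≠ 1 := chi_pow_ne_one hχ two_pos (by norm_num)
  have hne3 : χ ^ 3 ≠ 1 := chi_pow_ne_one hχ three_pos (by norm_num)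
  have h0 : ‖gaussSum (1 : MulChar F ℂ) ψ‖ = 1 := by
    rw [gaussSum_one_eq hψ]; simp
  have habs : ‖(4 : ℂ) * ∑ a ∈ S4 F, ψ a‖ ≤ 1 + 3 * Real.sqrt (Fintype.card F) := by
    rw [key]
    have t1 := norm_add_le
      (gaussSum (1 : MulChar F ℂ) ψ + gaussSum χ ψ + gaussSum (χ ^ 2) ψ) (gaussSum (χ ^ 3) ψ)
    have t2 := norm_add_le (gaussSum (1 : MulChar F ℂ) ψ + gaussSum χ ψ) (gaussSum (χ ^ 2) ψ)
    have t3 := norm_add_le (gaussSum (1 : MulChar F ℂ) ψ) (gaussSum χ ψ)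
    rw [abs_gauss hne1 hψ] at t3
    rw [abs_gauss hne2 hψ] at t2
    rw [abs_gauss hne3 hψ] at t1
    rw [h0] at t3
    linarith
  have h4 : ‖(4 : ℂ) * ∑ a ∈ S4 F, ψ a‖ = 4 * ‖∑ a ∈ S4 F, ψ a‖ := by
    rw [norm_mul]; norm_num
  rw [h4] at habs
  linarith

end Gauss
section Spectral
open Matrix

variable {F : Type} [Field F] [Fintype F]

lemma eigen_eq (hc : ∃ c : Fˣ, ((c : F)) ^ 4 = -1) (ψ : AddChar F ℂ) :
    (Matrix.of fun u v : F => if (gpGraph F 4).Adj u v then (1 : ℂ) else 0) *ᵥ ⇑ψ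
      = (∑ a ∈ S4 F, ψ a) • ⇑ψ := by
  funext u
  simp only [Matrix.mulVec, Matrix.of_apply, dotProduct, Pi.smul_apply, smul_eq_mul]
  have h1 : ∀ v : F, (if (gpGraph F 4).Adj u v then (1 : ℂ) else 0) * ψ v
      = if v - u ∈ S4 F then ψ v else 0 := fun v => by
    rw [gp_adj hc]
    split <;> simp
  rw [Finset.sum_congr rfl fun v _ => h1 v, ← Finset.sum_filter]
  have h2 : ∑ v ∈ Finset.univ.filter (fun v : F => v - u ∈ S4 F), ψ v
      = ∑ a ∈ S4 F, ψ (u + a) := by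
    refine Finset.sum_nbij' (fun v => v - u) (fun a => u + a) ?_ ?_ ?_ ?_ ?_
    · intro v hv; simpa using (Finset.mem_filter.mp hv).2
    · intro a ha
      simp only [Finset.mem_filter, Finset.mem_univ, true_and]
      simpa using ha
    · intro v _; ring
    · intro a _; ring
    · intro v _; rw [add_sub_cancel]
  rw [h2]
  rw [Finset.sum_congr rfl (g := fun a => ψ u * ψ a) fun a _ => by rw [AddChar.map_add_eq_mul]]
  rw [← Finset.mul_sum]
  ring

lemma spectrum_mem (hc : ∃ c : Fˣ, ((c : F)) ^ 4 = -1) {μ : ℂ}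
    (hμ : μ ∈ spectrum ℂ
      (Matrix.of fun u v : F => if (gpGraph F 4).Adj u v then (1 : ℂ) else 0)) :
    ∃ ψ : AddChar F ℂ, μ = ∑ a ∈ S4 F, ψ a := by
  by_contra hcon
  push_neg at hcon
  set A := (Matrix.of fun u v : F => if (gpGraph F 4).Adj u v then (1 : ℂ) else 0) with hA
  rw [spectrum.mem_iff] at hμ
  set M := algebraMap ℂ (Matrix F F ℂ) μ - A with hM
  have hdet : M.det = 0 := by
    by_contra hd
    exact hμ (M.isUnit_iff_isUnit_det.mpr (isUnit_iff_ne_zero.mpr hd))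
  obtain ⟨v, hv0, hMv⟩ := Matrix.exists_mulVec_eq_zero_iff.mpr hdet
  have hMψ : ∀ ψ : AddChar F ℂ, M *ᵥ ⇑ψ = (μ - ∑ a ∈ S4 F, ψ a) • ⇑ψ := by
    intro ψ
    rw [hM, Matrix.sub_mulVec, eigen_eq hc ψ, Algebra.algebraMap_eq_smul_one,
      Matrix.smul_mulVec, Matrix.one_mulVec, ← sub_smul]
  set b := AddChar.complexBasis F with hb
  have hv : ∑ ψ : AddChar F ℂ, (b.repr v) ψ • b ψ = v := b.sum_repr v
  have h0 : ∑ ψ : AddChar F ℂ, ((b.repr v) ψ * (μ - ∑ a ∈ S4 F, ψ a)) • b ψ = 0 := by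
    have step : ∀ ψ : AddChar F ℂ,
        ((b.repr v) ψ * (μ - ∑ a ∈ S4 F, ψ a)) • b ψ
          = (b.repr v) ψ • (M.mulVecLin (b ψ)) := by
      intro ψ
      rw [Matrix.mulVecLin_apply, hb, AddChar.complexBasis_apply, hMψ ψ, smul_smul]
    rw [Finset.sum_congr rfl fun ψ _ => step ψ]
    have hsum : ∑ ψ : AddChar F ℂ, (b.repr v) ψ • M.mulVecLin (b ψ)
        = M.mulVecLin (∑ ψ : AddChar F ℂ, (b.repr v) ψ • b ψ) := by
      rw [map_sum]
      exact Finset.sum_congr rfl fun ψ _ => (M.mulVecLin.map_smul _ _).symm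
    rw [hsum, hv, Matrix.mulVecLin_apply, hMv]
  have hli := linearIndependent_iff'.mp b.linearIndependent Finset.univ
    (fun ψ => (b.repr v) ψ * (μ - ∑ a ∈ S4 F, ψ a)) h0
  apply hv0
  rw [← hv]
  refine Finset.sum_eq_zero fun ψ _ => ?_
  have hcoef := hli ψ (Finset.mem_univ ψ)
  rcases mul_eq_zero.mp hcoef with h | h
  · rw [h, zero_smul]
  · exact absurd (sub_eq_zero.mp h) (hcon ψ)

end Spectral
theorem stmt_19 (p m n : ℕ) (hp : p.Prime) (hm : 0 < m) (hp4 : p % 4 = 1)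
    (hme : Even m)
    (F : Type) [Field F] [Fintype F] (hF : Fintype.card F = p ^ m)
    (hn : n = (p ^ m - 1) / 4) :
    (gpGraph F 4).Connected ∧
    (gpGraph F 4).IsRegularOfDegree n ∧
    ∀ μ ∈ spectrum ℂ
        (Matrix.of fun u v : F => if (gpGraph F 4).Adj u v then (1 : ℂ) else 0),
      μ ≠ (n : ℂ) → ‖μ‖ ≤ 2 * Real.sqrt ((n : ℝ) - 1) := by
  have hp5 : 5 ≤ p := by have := hp.two_le; omega
  obtain ⟨k, hk⟩ := hme
  have hm2 : 2 ≤ m := by omega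
  have hq25 : 25 ≤ p ^ m := by
    calc (25 : ℕ) = 5 ^ 2 := by norm_num
    _ ≤ p ^ 2 := Nat.pow_le_pow_left hp5 2
    _ ≤ p ^ m := Nat.pow_le_pow_right (by omega) hm2
  have h8 : 8 ∣ Fintype.card F - 1 := by
    rw [hF]
    have hpodd : Odd p := Nat.odd_iff.mpr (by omega)
    have htodd : Odd (p ^ k) := hpodd.pow
    obtain ⟨s, hs⟩ := htodd
    obtain ⟨r, hr⟩ := Nat.even_mul_succ_self s
    refine ⟨r, ?_⟩
    have ht : p ^ m = (p ^ k) ^ 2 := by rw [← pow_mul]; congr 1; omega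
    have h1 : (2 * s + 1) ^ 2 = 4 * (s * (s + 1)) + 1 := by ring
    rw [ht, hs, h1, hr]
    omega
  have h4 : 4 ∣ Fintype.card F - 1 := (by norm_num : (4:ℕ) ∣ 8).trans h8
  have hc := exists_c h8
  obtain ⟨χ, hχord, hχiff⟩ := exists_chi h4
  have hcard := card_S4 hχord hχiff
  rw [hF] at hcard
  have hScard : (S4 F).card = n := by omega
  -- regularity
  have hreg : (gpGraph F 4).IsRegularOfDegree n := by
    intro v
    show ((gpGraph F 4).neighborFinset v).card = n
    rw [← hScard]
    refine Finset.card_bij (fun u _ => u - v) ?_ ?_ ?_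
    · intro u hu
      rw [SimpleGraph.mem_neighborFinset] at hu
      exact (gp_adj hc v u).mp hu
    · intro u1 h1 u2 h2 h
      exact sub_left_inj.mp h
    · intro a ha
      refine ⟨v + a, ?_, by ring⟩
      rw [SimpleGraph.mem_neighborFinset, gp_adj hc]
      simpa using ha
  -- connectivity
  have htop : AddSubgroup.closure ((S4 F : Set F)) = ⊤ := by
    set H := AddSubgroup.closure ((S4 F : Set F)) with hH
    have hsub : insert (0 : F) (S4 F) ⊆ Set.toFinset ((H : Set F)) := by
      intro a hains
      rw [Set.mem_toFinset]
      rcases Finset.mem_insert.mp hains with rfl | haS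
      · exact H.zero_mem
      · exact AddSubgroup.subset_closure haS
    have hlb : n + 1 ≤ Nat.card H := by
      have h1 : (insert (0:F) (S4 F)).card = n + 1 := by
        rw [Finset.card_insert_of_notMem (fun h => S4_ne_zero h rfl), hScard]
      calc n + 1 = (insert (0:F) (S4 F)).card := h1.symm
      _ ≤ (Set.toFinset ((H : Set F))).card := Finset.card_le_card hsub
      _ = Nat.card H := by
        rw [Set.toFinset_card, Nat.card_eq_fintype_card]
        exact Fintype.card_congr (Equiv.setCongr rfl)
    have hdvd : Nat.card H ∣ Nat.card F := AddSubgroup.card_addSubgroup_dvd_card H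
    rw [Nat.card_eq_fintype_card (α := F), hF] at hdvd
    obtain ⟨j, hj, hcardH⟩ := (Nat.dvd_prime_pow hp).mp hdvd
    rcases eq_or_lt_of_le hj with rfl | hlt
    · apply AddSubgroup.eq_top_of_card_eq
      rw [hcardH, Nat.card_eq_fintype_card (α := F), hF]
    · exfalso
      have h1 : p ^ j ≤ p ^ (m - 1) := Nat.pow_le_pow_right (by omega) (by omega)
      have h2 : p ^ (m - 1) * 5 ≤ p ^ m := by
        calc p ^ (m - 1) * 5 ≤ p ^ (m - 1) * p := Nat.mul_le_mul_left _ hp5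
        _ = p ^ m := by rw [← pow_succ]; congr 1; omega
      rw [hcardH] at hlb
      omega
  have hconn : (gpGraph F 4).Connected := by
    rw [SimpleGraph.connected_iff]
    refine ⟨?_, ⟨0⟩⟩
    let hmap : ∀ c : F, gpGraph F 4 →g gpGraph F 4 := fun c =>
      { toFun := fun z => z + c,
        map_rel' := by
          intro a b hab
          rw [gp_adj hc] at *
          simpa using hab }
    let hnegmap : gpGraph F 4 →g gpGraph F 4 :=
      { toFun := fun z => -z,
        map_rel' := by
          intro a b hab
          rw [gp_adj hc] at *
          rw [show -b - -a = -(b - a) by ring]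
          exact S4_neg hc hab }
    have h0 : ∀ w : F, (gpGraph F 4).Reachable 0 w := by
      intro w
      have hw : w ∈ AddSubgroup.closure ((S4 F : Set F)) := by rw [htop]; trivial
      refine AddSubgroup.closure_induction ?_ ?_ ?_ ?_ hw
      · intro x hx
        apply SimpleGraph.Adj.reachable
        rw [gp_adj hc]
        simpa using hx
      · exact SimpleGraph.Reachable.refl 0
      · intro x y _ _ rx ry
        have h2 : (gpGraph F 4).Reachable (0 + x) (y + x) := ry.map (hmap x)
        rw [zero_add, add_comm] at h2
        exact rx.trans h2
      · intro x _ rx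
        have h2 : (gpGraph F 4).Reachable (-0) (-x) := rx.map hnegmap
        rwa [neg_zero] at h2
    intro u v
    exact (h0 u).symm.trans (h0 v)
  refine ⟨hconn, hreg, ?_⟩
  intro μ hμ hμn
  obtain ⟨ψ, rfl⟩ := spectrum_mem hc hμ
  by_cases hψ : ψ = 1
  · exfalso
    apply hμn
    subst hψ
    have h1 : ∑ a ∈ S4 F, (1 : AddChar F ℂ) a = ((S4 F).card : ℂ) := by
      simp
    rw [h1, hScard]
  · have hb := abs_lam_le hχord hχiff hψ
    have hcF : (Fintype.card F : ℝ) = ((p ^ m : ℕ) : ℝ) := by exact_mod_cast congrArg Nat.cast hF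
    set q : ℝ := ((p ^ m : ℕ) : ℝ) with hqdef
    have hqR : 25 ≤ q := by rw [hqdef]; exact_mod_cast hq25
    set s := Real.sqrt q with hsdef
    have hs0 : 0 ≤ s := Real.sqrt_nonneg q
    have hs2 : s ^ 2 = q := Real.sq_sqrt (by linarith)
    have hs5 : 5 ≤ s := by
      have h5 := Real.sqrt_le_sqrt hqR
      rwa [show (25:ℝ) = 5 ^ 2 by norm_num, Real.sqrt_sq (by norm_num), ← hsdef] at h5
    have hnR : (n : ℝ) = (q - 1) / 4 := by
      have h4n : (4 * n : ℕ) = (p ^ m - 1 : ℕ) := by omega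
      have h2 : (4 : ℝ) * n = q - 1 := by
        have h3 := congrArg (fun t : ℕ => (t : ℝ)) h4n
        push_cast [Nat.cast_sub (by omega : 1 ≤ p ^ m)] at h3
        rw [hqdef]
        push_cast
        linarith
      linarith
    have hgoal : 2 * Real.sqrt ((n : ℝ) - 1) = Real.sqrt (q - 5) := by
      rw [hnR, show (q - 1) / 4 - 1 = (q - 5) / 4 by ring,
        Real.sqrt_div (by linarith) 4,
        show Real.sqrt 4 = 2 by
          rw [show (4:ℝ) = 2 ^ 2 by norm_num, Real.sqrt_sq (by norm_num)]]
      ring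
    rw [hgoal]
    rw [show Real.sqrt (Fintype.card F) = s by rw [hsdef, hcF]] at hb
    refine hb.trans ?_
    rw [div_le_iff₀ (by norm_num)]
    have hsq : Real.sqrt (q - 5) ^ 2 = q - 5 := Real.sq_sqrt (by linarith)
    have h55 : 5 ≤ Real.sqrt (q - 5) * 4 + 1 := by
      nlinarith [Real.sqrt_nonneg (q - 5)]
    nlinarith [Real.sqrt_nonneg (q - 5), hs2, hs5, hsq]
end
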